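/- arXiv:1512.03037 — 5 statements merged into one kernel-verified Lean document; each statement's English description precedes it below -/
import Mathlib

section
/- Let G be a finite abelian group of order n ≥ 2 whose exponent κ is odd and has at least one prime divisor congruent to 5 modulo 6, and let p be the smallest such prime divisor. Then the maximum size of a 3-independent subset of G equals (1 + 1/p)·n/6 = (p+1)·n/(6p). -/
/-- A subset `A` of an (additive) abelian group is `t`-independent if whenever
`λ₁a₁ + ⋯ + λₘaₘ = 0` with `a₁, …, aₘ` the (distinct) elements of `A` and
`|λ₁| + ⋯ + |λₘ| ≤ t`, all coefficients `λᵢ` vanish. -/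
def IsTIndep {G : Type*} [AddCommGroup G] (t : ℕ) (A : Finset G) : Prop :=
  ∀ c : G → ℤ, (∀ x ∉ A, c x = 0) →
    (∑ x ∈ A, |c x|) ≤ (t : ℤ) →
    (∑ x ∈ A, c x • x) = 0 → ∀ x, c x = 0

/-- `sIndep G t` is the maximum size of a `t`-independent subset of `G`
(it is `0` if `G` has no nonempty `t`-independent subset, since `∅` is
`t`-independent). -/
noncomputable def sIndep (G : Type*) [AddCommGroup G] (t : ℕ) : ℕ :=
  sSup {m | ∃ A : Finset G, IsTIndep t A ∧ A.card = m}

open Finset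
open scoped Pointwise

namespace Stmt13

/-- The least prime `≡ 2 [MOD 3]` dividing `n` (junk `0` if none exists). -/
noncomputable def bp (n : ℕ) : ℕ := sInf {q | Nat.Prime q ∧ q ∣ n ∧ q % 3 = 2}

/-- The excess term in the Diananda–Yap bound. -/
noncomputable def eps (n : ℕ) : ℕ := n / bp n

lemma bp_spec {n : ℕ} (h : ∃ q, Nat.Prime q ∧ q ∣ n ∧ q % 3 = 2) :
    Nat.Prime (bp n) ∧ bp n ∣ n ∧ bp n % 3 = 2 :=
  Nat.sInf_mem (s := {q | Nat.Prime q ∧ q ∣ n ∧ q % 3 = 2}) h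

lemma bp_le {n q : ℕ} (hq : Nat.Prime q) (hdvd : q ∣ n) (hm : q % 3 = 2) : bp n ≤ q :=
  Nat.sInf_le ⟨hq, hdvd, hm⟩

lemma eps_pos {n : ℕ} (hn : n ≠ 0) (h : ∃ q, Nat.Prime q ∧ q ∣ n ∧ q % 3 = 2) :
    1 ≤ eps n := by
  obtain ⟨hp, hdvd, -⟩ := bp_spec h
  exact Nat.one_le_div_iff hp.pos |>.mpr (Nat.le_of_dvd (Nat.pos_of_ne_zero hn) hdvd)

lemma eps_eq_zero {n : ℕ} (h : ¬ ∃ q, Nat.Prime q ∧ q ∣ n ∧ q % 3 = 2) : eps n = 0 := by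
  have : bp n = 0 := by
    rw [bp, Nat.sInf_eq_zero]
    right
    ext q
    simp only [Set.mem_setOf_eq, Set.mem_empty_iff_false, iff_false]
    intro hq
    exact h ⟨q, hq⟩
  simp [eps, this]

lemma mod3_ne_two {n : ℕ} (hn : n ≠ 0)
    (h : ∀ q, Nat.Prime q → q ∣ n → q % 3 ≠ 2) : n % 3 ≠ 2 := by
  induction n using Nat.strong_induction_on with
  | _ n ih =>
    rcases eq_or_lt_of_le (Nat.one_le_iff_ne_zero.mpr hn) with h1 | h2
    · omega
    · -- n ≥ 2
      obtain ⟨q0, hq0⟩ : ∃ q0, q0 = n.minFac := ⟨_, rfl⟩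
      have hpf : Nat.Prime q0 := hq0 ▸ Nat.minFac_prime (by omega)
      have hdvd : q0 ∣ n := hq0 ▸ Nat.minFac_dvd n
      obtain ⟨m, hm⟩ := hdvd
      have hq2 : 2 ≤ q0 := hpf.two_le
      have hm0 : m ≠ 0 := by rintro rfl; omega
      have hmlt : m < n := by
        rcases Nat.lt_or_ge m n with h' | h'
        · exact h'
        · exfalso; nlinarith [Nat.pos_of_ne_zero hm0]
      have hmm : m % 3 ≠ 2 := by
        refine ih m hmlt hm0 (fun q hq hdq => h q hq ?_)
        exact hdq.trans ⟨q0, by rw [hm]; ring⟩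
      have hqq : q0 % 3 ≠ 2 := h _ hpf (hm ▸ Dvd.intro m rfl)
      have : n % 3 = (q0 % 3) * (m % 3) % 3 := by
        rw [hm, Nat.mul_mod]
      have hq3 : q0 % 3 < 3 := Nat.mod_lt _ (by norm_num)
      have hm3 : m % 3 < 3 := Nat.mod_lt _ (by norm_num)
      interval_cases hA : (q0 % 3) <;> interval_cases hB : (m % 3) <;> omega

lemma eps_mul_le {k ν n : ℕ} (h : n = k * ν) (hn : n ≠ 0) : ν * eps k ≤ eps n := by
  by_cases hb : ∃ q, Nat.Prime q ∧ q ∣ k ∧ q % 3 = 2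
  · obtain ⟨hp', hd', hm'⟩ := bp_spec hb
    set p' := bp k with hp'def
    have hdn : p' ∣ n := h ▸ hd'.mul_right ν
    have hbn : ∃ q, Nat.Prime q ∧ q ∣ n ∧ q % 3 = 2 := ⟨p', hp', hdn, hm'⟩
    obtain ⟨hq, hqd, -⟩ := bp_spec hbn
    have hle : bp n ≤ p' := bp_le hp' hdn hm'
    have h1 : ν * eps k = n / p' := by
      obtain ⟨m, hmk⟩ := hd'
      have : eps k = m := by
        rw [eps, ← hp'def, hmk, Nat.mul_div_cancel_left _ hp'.pos]
      rw [this, h, hmk]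
      have harg : p' * m * ν = p' * (ν * m) := by ring
      rw [harg, Nat.mul_div_cancel_left _ hp'.pos]
    rw [h1, eps]
    exact Nat.div_le_div_left hle hq.pos
  · simp [eps_eq_zero hb]

section Transform

variable {G : Type*} [AddCommGroup G] [DecidableEq G]

lemma exists_fixpoint (SS : Finset G) :
    ∀ (n : ℕ) (A B : Finset G), B.card ≤ n → A.Nonempty → B.Nonempty → (A + B) ⊆ SS →
    ∃ A' B' : Finset G, A'.Nonempty ∧ B'.Nonempty ∧ B' ⊆ B ∧ (A' + B') ⊆ SS ∧
      A'.card + B'.card = A.card + B.card ∧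
      (∀ a ∈ A', ∀ b ∈ B', ∀ b' ∈ B', a + b - b' ∈ A') := by
  intro n
  induction n with
  | zero =>
    intro A B hB hA hBne _
    exact absurd (Nat.le_zero.mp hB ▸ card_pos.mpr hBne) (by simp)
  | succ n ih =>
    intro A B hB hA hBne hsub
    by_cases hfix : ∀ a ∈ A, ∀ b ∈ B, ∀ b' ∈ B, a + b - b' ∈ A
    · exact ⟨A, B, hA, hBne, Finset.Subset.refl B, hsub, rfl, hfix⟩
    · push_neg at hfix
      obtain ⟨a, ha, b, hb, b', hb', hnot⟩ := hfix
      set e : G := a - b' with he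
      set A₂ : Finset G := A ∪ B.image (· + e) with hA₂
      set B₂ : Finset G := B.filter (fun y => y + e ∈ A) with hB₂
      have hb'B₂ : b' ∈ B₂ := by
        simp only [hB₂, mem_filter]
        refine ⟨hb', ?_⟩
        have : b' + e = a := by rw [he]; abel
        rw [this]; exact ha
      have hbB₂ : b ∉ B₂ := by
        simp only [hB₂, mem_filter]
        rintro ⟨-, hmem⟩
        have : b + e = a + b - b' := by rw [he]; abel
        rw [this] at hmem
        exact hnot hmem
      have hB₂ss : B₂ ⊂ B := by
        refine ⟨filter_subset _ _, fun hsup => hbB₂ (hsup hb)⟩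
      have hB₂card : B₂.card < B.card := card_lt_card hB₂ss
      have hA₂sub : (A₂ + B₂) ⊆ SS := by
        intro x hx
        rw [Finset.mem_add] at hx
        obtain ⟨u, hu, v, hv, rfl⟩ := hx
        rw [hA₂, mem_union] at hu
        have hvB : v ∈ B := (filter_subset _ _) hv
        have hvA : v + e ∈ A := (mem_filter.mp hv).2
        rcases hu with hu | hu
        · exact hsub (Finset.add_mem_add hu hvB)
        · obtain ⟨β, hβ, rfl⟩ := mem_image.mp hu
          have : β + e + v = (v + e) + β := by abel
          rw [this]
          exact hsub (Finset.add_mem_add hvA hβ)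
      have hA₂card : A₂.card + B₂.card = A.card + B.card := by
        have h1 : (A ∪ B.image (· + e)).card + (A ∩ B.image (· + e)).card
            = A.card + (B.image (· + e)).card := card_union_add_card_inter _ _
        rw [← hA₂] at h1
        have h3 : (B.image (· + e)).card = B.card :=
          card_image_of_injective _ (add_left_injective e)
        have h2 : B₂.card = (A ∩ B.image (· + e)).card := by
          refine card_bij (fun y _ => y + e) ?_ ?_ ?_
          · intro y hy
            rw [mem_inter]
            exact ⟨(mem_filter.mp hy).2, mem_image_of_mem _ ((mem_filter.mp hy).1)⟩
          · intro y₁ h₁ y₂ h₂ hh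
            exact add_left_injective e hh
          · intro z hz
            rw [mem_inter] at hz
            obtain ⟨y, hy, rfl⟩ := mem_image.mp hz.2
            exact ⟨y, mem_filter.mpr ⟨hy, hz.1⟩, rfl⟩
        omega
      obtain ⟨A', B', h1, h2, h3, h4, h5, h6⟩ :=
        ih A₂ B₂ (by omega) (hA.mono subset_union_left) ⟨b', hb'B₂⟩ hA₂sub
      exact ⟨A', B', h1, h2, h3.trans (filter_subset _ _), h4, by omega, h6⟩

end Transform
section Fibers

variable {G : Type*} [AddCommGroup G] [Fintype G] [DecidableEq G]
variable {H : Type*} [AddCommGroup H] [Fintype H] [DecidableEq H]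

/-- The fiber of `π` over `y` as a finset. -/
def fib (π : G →+ H) (y : H) : Finset G := univ.filter (fun g => π g = y)

lemma card_fib_eq (π : G →+ H) (hs : Function.Surjective π) (y z : H) :
    (fib π y).card = (fib π z).card := by
  obtain ⟨gy, hgy⟩ := hs y
  obtain ⟨gz, hgz⟩ := hs z
  refine card_bij (fun g _ => g - gy + gz) ?_ ?_ ?_
  · intro g hg
    simp only [fib, mem_filter, mem_univ, true_and] at hg ⊢
    simp [map_add, map_sub, hg, hgy, hgz]
  · intro g₁ h₁ g₂ h₂ hh
    have : g₁ - gy + gz + (gy - gz) = g₂ - gy + gz + (gy - gz) := by rw [hh]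
    calc g₁ = g₁ - gy + gz + (gy - gz) := by abel
    _ = g₂ - gy + gz + (gy - gz) := this
    _ = g₂ := by abel
  · intro g hg
    simp only [fib, mem_filter, mem_univ, true_and] at hg
    refine ⟨g - gz + gy, ?_, by abel⟩
    simp only [fib, mem_filter, mem_univ, true_and]
    simp [map_add, map_sub, hg, hgy, hgz]

lemma card_eq_quot_mul_fib (π : G →+ H) (hs : Function.Surjective π) (y : H) :
    Fintype.card G = Fintype.card H * (fib π y).card := by
  have h1 : (univ : Finset G).card = ∑ z ∈ (univ : Finset H), ((univ : Finset G).filter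
      (fun g => π g = z)).card :=
    card_eq_sum_card_fiberwise (fun g _ => mem_univ (π g))
  have h2 : ∀ z ∈ (univ : Finset H), ((univ : Finset G).filter (fun g => π g = z)).card
      = (fib π y).card := fun z _ => card_fib_eq π hs z y
  rw [Fintype.card, h1, Finset.sum_congr rfl h2, Finset.sum_const, smul_eq_mul, Fintype.card]

lemma card_preimage (π : G →+ H) (hs : Function.Surjective π) (T : Finset H) (y : H) :
    ((univ : Finset G).filter (fun g => π g ∈ T)).card = T.card * (fib π y).card := by
  have h1 : ((univ : Finset G).filter (fun g => π g ∈ T)).card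
      = ∑ z ∈ T, (((univ : Finset G).filter (fun g => π g ∈ T)).filter
        (fun g => π g = z)).card := by
    refine card_eq_sum_card_fiberwise (fun g hg => ?_)
    exact (mem_filter.mp hg).2
  have h2 : ∀ z ∈ T, (((univ : Finset G).filter (fun g => π g ∈ T)).filter
      (fun g => π g = z)).card = (fib π y).card := by
    intro z hz
    rw [filter_filter]
    have : ((univ : Finset G).filter (fun g => π g ∈ T ∧ π g = z))
        = (univ : Finset G).filter (fun g => π g = z) := by
      apply filter_congr
      intro g _
      constructor
      · rintro ⟨-, h⟩; exact h
      · intro h; exact ⟨h ▸ hz, h⟩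
    rw [this]
    exact card_fib_eq π hs z y
  rw [h1, Finset.sum_congr rfl h2, Finset.sum_const, smul_eq_mul]

end Fibers
section DY

universe u

theorem dy : ∀ (n : ℕ) (G : Type u) [AddCommGroup G] [Fintype G],
    Fintype.card G ≤ n → Odd (Fintype.card G) →
    ∀ S : Finset G, (∀ x ∈ S, ∀ y ∈ S, x + y ∉ S) →
    3 * S.card ≤ Fintype.card G + eps (Fintype.card G) := by
  intro n
  induction n with
  | zero =>
    intro G _ _ hcard _ _ _
    haveI : Nonempty G := ⟨0⟩
    have := Fintype.card_pos (α := G)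
    omega
  | succ n ih =>
    intro G instG instFT hcard hodd S hSF
    classical
    rcases S.eq_empty_or_nonempty with rfl | hSne
    · simp
    -- S is nonempty
    have hdisjS : Disjoint S (S + S) := by
      rw [Finset.disjoint_left]
      intro x hxS hxSS
      rw [Finset.mem_add] at hxSS
      obtain ⟨u, hu, v, hv, rfl⟩ := hxSS
      exact hSF u hu v hv hxS
    have hcardG0 : Fintype.card G ≠ 0 := Fintype.card_ne_zero
    obtain ⟨A', B', hA'ne, hB'ne, hB'S, hsub, hcards, hfix⟩ :=
      exists_fixpoint (G := G) (S + S) S.card S S le_rfl hSne hSne (Finset.Subset.refl _)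
    by_cases hB1 : B'.card = 1
    · -- endgame: 3|S| ≤ n + 1
      obtain ⟨b, rfl⟩ := Finset.card_eq_one.mp hB1
      have hA'c : A'.card + 1 = S.card + S.card := by simpa using hcards
      have hsub2 : A'.image (· + b) ⊆ S + S := by
        intro x hx
        obtain ⟨a, ha, rfl⟩ := Finset.mem_image.mp hx
        exact hsub (Finset.add_mem_add ha (Finset.mem_singleton_self b))
      have hA'img : (A'.image (· + b)).card = A'.card :=
        Finset.card_image_of_injective _ (add_left_injective b)
      have hSS_ge : S.card + S.card ≤ (S + S).card + 1 := by
        have := Finset.card_le_card hsub2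
        omega
      have hineq : S.card + (S + S).card ≤ Fintype.card G := by
        have hsubU : S ∪ (S + S) ⊆ Finset.univ := Finset.subset_univ _
        have := Finset.card_le_card hsubU
        rw [Finset.card_union_of_disjoint hdisjS] at this
        simpa [Finset.card_univ] using this
      have h31 : 3 * S.card ≤ Fintype.card G + 1 := by omega
      by_cases hbad : ∃ q, Nat.Prime q ∧ q ∣ Fintype.card G ∧ q % 3 = 2
      · have := eps_pos hcardG0 hbad
        omega
      · have hmod := mod3_ne_two hcardG0 (by push_neg at hbad; exact fun q h1 h2 => hbad q h1 h2)
        have : 3 * S.card ≤ Fintype.card G := by omega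
        omega
    · -- main case: |B'| ≥ 2
      have hB2 : 2 ≤ B'.card := by
        have := Finset.card_pos.mpr hB'ne
        omega
      obtain ⟨b₀, hb₀, b₁, hb₁, hbne⟩ := Finset.one_lt_card.mp hB2
      -- the stabilizer of A'
      set N : AddSubgroup G :=
        { carrier := {g | ∀ a ∈ A', a + g ∈ A'}
          add_mem' := by
            intro g h hg hh a ha
            have : a + (g + h) = (a + g) + h := by abel
            rw [this]
            exact hh _ (hg _ ha)
          zero_mem' := by intro a ha; simpa using ha
          neg_mem' := by
            intro g hg a ha
            have himg : A'.image (· + g) = A' := by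
              apply Finset.eq_of_subset_of_card_le
              · intro x hx
                obtain ⟨u, hu, rfl⟩ := Finset.mem_image.mp hx
                exact hg u hu
              · rw [Finset.card_image_of_injective _ (add_left_injective g)]
            have ha' : a ∈ A'.image (· + g) := by rw [himg]; exact ha
            obtain ⟨u, hu, hu2⟩ := Finset.mem_image.mp ha'
            have : a + -g = u := by rw [← hu2]; abel
            rw [this]
            exact hu } with hNdef
      have hmemN : ∀ g, g ∈ N ↔ ∀ a ∈ A', a + g ∈ A' := fun g => Iff.rfl
      have hbbN : ∀ b ∈ B', ∀ b' ∈ B', b - b' ∈ N := by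
        intro b hb b' hb'
        rw [hmemN]
        intro a ha
        have : a + (b - b') = a + b - b' := by abel
        rw [this]
        exact hfix a ha b hb b' hb'
      -- quotient setup
      letI : Fintype (G ⧸ N) := Fintype.ofFinite _
      set π : G →+ G ⧸ N := QuotientAddGroup.mk' N with hπdef
      have hπs : Function.Surjective π := QuotientAddGroup.mk'_surjective N
      have hπ0 : ∀ g, π g = 0 ↔ g ∈ N := fun g => QuotientAddGroup.eq_zero_iff g
      set ν : ℕ := (fib π 0).card with hνdef
      set k : ℕ := Fintype.card (G ⧸ N) with hkdef
      have hnk : Fintype.card G = k * ν := card_eq_quot_mul_fib π hπs 0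
      have hν2 : 2 ≤ ν := by
        have hsub01 : ({0, b₁ - b₀} : Finset G) ⊆ fib π 0 := by
          intro x hx
          rcases Finset.mem_insert.mp hx with rfl | hx
          · simp only [fib, Finset.mem_filter, Finset.mem_univ, true_and]
            rw [hπ0]; exact N.zero_mem
          · rw [Finset.mem_singleton] at hx
            subst hx
            simp only [fib, Finset.mem_filter, Finset.mem_univ, true_and]
            rw [hπ0]; exact hbbN b₁ hb₁ b₀ hb₀
        have h2 : ({0, b₁ - b₀} : Finset G).card = 2 := by
          rw [Finset.card_insert_of_notMem, Finset.card_singleton]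
          rw [Finset.mem_singleton]
          intro h
          have h2 : b₁ - b₀ = 0 := h.symm
          rw [sub_eq_zero] at h2
          exact hbne h2.symm
        calc 2 = ({0, b₁ - b₀} : Finset G).card := h2.symm
        _ ≤ _ := Finset.card_le_card hsub01
      set T : Finset (G ⧸ N) := S.image π with hTdef
      set P : Finset G := Finset.univ.filter (fun g => π g ∈ T) with hPdef
      have hPcard : P.card = T.card * ν := card_preimage π hπs T 0
      have hSP : S ⊆ P := by
        intro s hs
        rw [hPdef, Finset.mem_filter]
        exact ⟨Finset.mem_univ s, Finset.mem_image_of_mem π hs⟩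
      set C' : Finset G := A'.image (· + b₀) with hC'def
      have hC'card : C'.card = A'.card :=
        Finset.card_image_of_injective _ (add_left_injective b₀)
      have hC'SS : C' ⊆ S + S := by
        intro x hx
        obtain ⟨a, ha, rfl⟩ := Finset.mem_image.mp hx
        exact hsub (Finset.add_mem_add ha hb₀)
      have hdisjC'P : Disjoint C' P := by
        rw [Finset.disjoint_left]
        intro x hxC hxP
        obtain ⟨a, ha, rfl⟩ := Finset.mem_image.mp hxC
        rw [hPdef, Finset.mem_filter] at hxP
        obtain ⟨s, hsS, hsπ⟩ := Finset.mem_image.mp hxP.2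
        -- a + b₀ - s ∈ N
        have hdiff : (a + b₀) - s ∈ N := by
          rw [← hπ0, map_sub, hsπ, sub_self]
        have hsA : s = a + -( (a + b₀) - s) + b₀ := by abel
        have : a + -((a + b₀) - s) ∈ A' := (hmemN _).mp (N.neg_mem hdiff) a ha
        have hsC' : s ∈ C' := by
          rw [hC'def, Finset.mem_image]
          exact ⟨_, this, hsA.symm⟩
        have hsSS : s ∈ S + S := hC'SS hsC'
        exact (Finset.disjoint_left.mp hdisjS) hsS hsSS
      have hkey : 2 * S.card + T.card * ν ≤ Fintype.card G + B'.card := by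
        have hsubU : C' ∪ P ⊆ Finset.univ := Finset.subset_univ _
        have h1 := Finset.card_le_card hsubU
        rw [Finset.card_union_of_disjoint hdisjC'P, Finset.card_univ] at h1
        omega
      have hB'ν : B'.card ≤ ν := by
        have : B'.image (· - b₀) ⊆ fib π 0 := by
          intro x hx
          obtain ⟨b, hb, rfl⟩ := Finset.mem_image.mp hx
          simp only [fib, Finset.mem_filter, Finset.mem_univ, true_and]
          rw [hπ0]
          exact hbbN b hb b₀ hb₀
        have h2 := Finset.card_le_card this
        rwa [Finset.card_image_of_injective _ (sub_left_injective)] at h2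
      by_cases hbig : S.card + ν ≤ T.card * ν
      · have h3 : 3 * S.card ≤ Fintype.card G := by omega
        omega
      · push_neg at hbig
        -- fibers of S
        have hfibS : S.card = ∑ w ∈ T, (S.filter (fun g => π g = w)).card :=
          Finset.card_eq_sum_card_fiberwise (fun g hg => Finset.mem_image_of_mem π hg)
        have hfible : ∀ w : G ⧸ N, (S.filter (fun g => π g = w)).card ≤ ν := by
          intro w
          have h1 : S.filter (fun g => π g = w) ⊆ fib π w := by
            intro g hg
            simp only [fib, Finset.mem_filter, Finset.mem_univ, true_and]
            exact (Finset.mem_filter.mp hg).2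
          have := Finset.card_le_card h1
          rwa [card_fib_eq π hπs w 0] at this
        have hpair : ∀ w₁ ∈ T, ∀ w₂ ∈ T, w₁ ≠ w₂ →
            ¬ ((S.filter (fun g => π g = w₁)).card + (S.filter (fun g => π g = w₂)).card ≤ ν) := by
          intro w₁ h₁ w₂ h₂ hne hle
          have hT2 : 2 ≤ T.card := Finset.one_lt_card.mpr ⟨w₁, h₁, w₂, h₂, hne⟩
          have hw₂e : w₂ ∈ T.erase w₁ := Finset.mem_erase.mpr ⟨hne.symm, h₂⟩
          have hsplit1 : ∑ w ∈ T, (S.filter (fun g => π g = w)).card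
              = (S.filter (fun g => π g = w₁)).card
              + ∑ w ∈ T.erase w₁, (S.filter (fun g => π g = w)).card :=
            (Finset.add_sum_erase T _ h₁).symm
          have hsplit2 : ∑ w ∈ T.erase w₁, (S.filter (fun g => π g = w)).card
              = (S.filter (fun g => π g = w₂)).card
              + ∑ w ∈ (T.erase w₁).erase w₂, (S.filter (fun g => π g = w)).card :=
            (Finset.add_sum_erase _ _ hw₂e).symm
          have hrest : ∑ w ∈ (T.erase w₁).erase w₂, (S.filter (fun g => π g = w)).card
              ≤ ((T.erase w₁).erase w₂).card * ν := by
            calc ∑ w ∈ (T.erase w₁).erase w₂, (S.filter (fun g => π g = w)).card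
                ≤ ∑ _w ∈ (T.erase w₁).erase w₂, ν := Finset.sum_le_sum (fun w _ => hfible w)
            _ = ((T.erase w₁).erase w₂).card * ν := by rw [Finset.sum_const, smul_eq_mul]
          have hce : ((T.erase w₁).erase w₂).card + 2 = T.card := by
            rw [Finset.card_erase_of_mem hw₂e, Finset.card_erase_of_mem h₁]
            omega
          obtain ⟨u, hu⟩ : ∃ u, T.card = u + 2 := ⟨T.card - 2, by omega⟩
          have huer : ((T.erase w₁).erase w₂).card = u := by omega
          rw [huer] at hrest
          have hTν : T.card * ν = u * ν + 2 * ν := by rw [hu]; ring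
          have hScard_le : S.card ≤ ν + u * ν := by omega
          -- contradiction with hbig : T.card * ν < S.card + ν
          have : T.card * ν < ν + u * ν + ν := by omega
          rw [hTν] at this
          omega
        -- fiber sum inequality
        have hfibineq : ∀ x ∈ T, ∀ y ∈ T, ∀ z ∈ T, x + y = z →
            (S.filter (fun g => π g = x)).card + (S.filter (fun g => π g = z)).card ≤ ν ∧
            (S.filter (fun g => π g = y)).card + (S.filter (fun g => π g = z)).card ≤ ν := by
          intro x hx y hy z hz hxyz
          obtain ⟨sx, hsxS, hsx⟩ := Finset.mem_image.mp hx
          obtain ⟨sy, hsyS, hsy⟩ := Finset.mem_image.mp hy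
          set Sx := S.filter (fun g => π g = x) with hSx
          set Sy := S.filter (fun g => π g = y) with hSy
          set Sz := S.filter (fun g => π g = z) with hSz
          have hSxne : Sx.Nonempty := ⟨sx, Finset.mem_filter.mpr ⟨hsxS, hsx⟩⟩
          have hSyne : Sy.Nonempty := ⟨sy, Finset.mem_filter.mpr ⟨hsyS, hsy⟩⟩
          have hsubz : Sx + Sy ⊆ fib π z := by
            intro u hu
            rw [Finset.mem_add] at hu
            obtain ⟨g, hg, h, hh, rfl⟩ := hu
            simp only [fib, Finset.mem_filter, Finset.mem_univ, true_and]
            rw [map_add, (Finset.mem_filter.mp hg).2, (Finset.mem_filter.mp hh).2, hxyz]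
          have hdisjz : Disjoint (Sx + Sy) Sz := by
            rw [Finset.disjoint_left]
            intro u hu huz
            rw [Finset.mem_add] at hu
            obtain ⟨g, hg, h, hh, rfl⟩ := hu
            exact hSF g (Finset.mem_filter.mp hg).1 h (Finset.mem_filter.mp hh).1
              (Finset.mem_filter.mp huz).1
          have hcardz : (Sx + Sy).card + Sz.card ≤ ν := by
            have hU : (Sx + Sy) ∪ Sz ⊆ fib π z := by
              intro u hu
              rcases Finset.mem_union.mp hu with hu | hu
              · exact hsubz hu
              · simp only [fib, Finset.mem_filter, Finset.mem_univ, true_and]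
                exact (Finset.mem_filter.mp hu).2
            have h1 := Finset.card_le_card hU
            rw [Finset.card_union_of_disjoint hdisjz] at h1
            rwa [card_fib_eq π hπs z 0] at h1
          constructor
          · have := Finset.card_le_card_add_right hSyne (s := Sx)
            omega
          · have := Finset.card_le_card_add_left hSxne (t := Sy)
            omega
        by_cases hT0 : T ⊆ {0}
        · -- S inside N
          have hTeq : T = {0} := by
            have hTne : T.Nonempty := hSne.image π
            exact Finset.Subset.antisymm hT0 (Finset.singleton_subset_iff.mpr
              (by obtain ⟨w, hw⟩ := hTne; have := hT0 hw; rwa [Finset.mem_singleton.mp this] at hw))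
          have hSfib : S ⊆ fib π 0 := by
            intro s hs
            simp only [fib, Finset.mem_filter, Finset.mem_univ, true_and]
            have : π s ∈ T := Finset.mem_image_of_mem π hs
            rw [hTeq] at this
            exact Finset.mem_singleton.mp this
          have hSν : S.card ≤ ν := Finset.card_le_card hSfib
          have hk1 : k ≠ 1 := by
            intro hk1
            -- then the quotient is trivial and P = univ, contradicting disjointness with C'
            have hPuniv : P = Finset.univ := by
              apply Finset.eq_univ_of_forall
              intro g
              rw [hPdef, Finset.mem_filter]
              refine ⟨Finset.mem_univ g, ?_⟩
              have hsub : Subsingleton (G ⧸ N) := by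
                rw [← Fintype.card_le_one_iff_subsingleton, ← hkdef, hk1]
              rw [hTeq, Finset.mem_singleton]
              exact Subsingleton.elim _ _
            obtain ⟨a, ha⟩ := hA'ne
            have haC' : a + b₀ ∈ C' := Finset.mem_image_of_mem _ ha
            have haP : a + b₀ ∈ P := hPuniv ▸ Finset.mem_univ _
            exact (Finset.disjoint_left.mp hdisjC'P) haC' haP
          have hkodd : Odd k := by
            rw [hnk] at hodd
            exact (Nat.odd_mul.mp hodd).1
          have hk3 : 3 ≤ k := by
            rcases hkodd with ⟨t, ht⟩
            omega
          have : 3 * S.card ≤ 3 * ν := by omega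
          have h3 : 3 * ν ≤ k * ν := Nat.mul_le_mul_right ν hk3
          omega
        · -- T is sum-free; recurse to the quotient
          obtain ⟨w₀, hw₀T, hw₀ne⟩ : ∃ w₀ ∈ T, w₀ ≠ 0 := by
            by_contra hcon
            push_neg at hcon
            exact hT0 (fun w hw => Finset.mem_singleton.mpr (hcon w hw))
          have hTSF : ∀ x ∈ T, ∀ y ∈ T, x + y ∉ T := by
            intro x hx y hy hxy
            obtain ⟨hxz, hyz⟩ := hfibineq x hx y hy (x + y) hxy rfl
            by_cases h1 : x ≠ x + y
            · exact hpair x hx (x + y) hxy h1 hxz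
            · push_neg at h1
              by_cases h2 : y ≠ x + y
              · exact hpair y hy (x + y) hxy h2 hyz
              · push_neg at h2
                -- x = x + y and y = x + y imply x = y = 0
                have hy0 : y = 0 := by
                  have := h1
                  nth_rewrite 1 [← add_zero x] at this
                  exact (add_left_cancel this.symm)
                have hx0 : x = 0 := by
                  rw [hy0] at h2
                  simpa using h2.symm
                -- use the fibers at w₀ and 0
                have h0T : (0 : G ⧸ N) ∈ T := by rw [← hx0]; exact hx
                obtain ⟨hA, hB⟩ := hfibineq w₀ hw₀T 0 h0T w₀ hw₀T (add_zero w₀)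
                exact hpair 0 h0T w₀ hw₀T (Ne.symm hw₀ne) hB
          -- recurse
          have hkn : k ≤ n := by
            have hk1 : 1 ≤ k := Fintype.card_pos
            have : k < Fintype.card G := by
              rw [hnk]
              nlinarith
            omega
          have hkodd : Odd k := by
            rw [hnk] at hodd
            exact (Nat.odd_mul.mp hodd).1
          have hrec := ih (G ⧸ N) hkn hkodd T hTSF
          -- assemble
          have hSPν : S.card ≤ T.card * ν := hPcard ▸ Finset.card_le_card hSP
          have hmul : 3 * T.card * ν ≤ (k + eps k) * ν := by
            have := Nat.mul_le_mul_right ν hrec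
            calc 3 * T.card * ν = (3 * T.card) * ν := by ring
            _ ≤ (Fintype.card (G ⧸ N) + eps (Fintype.card (G ⧸ N))) * ν := this
            _ = (k + eps k) * ν := by rw [← hkdef]
          have hfin : ν * eps k ≤ eps (Fintype.card G) :=
            eps_mul_le hnk hcardG0
          calc 3 * S.card ≤ 3 * (T.card * ν) := by omega
          _ = 3 * T.card * ν := by ring
          _ ≤ (k + eps k) * ν := hmul
          _ = k * ν + ν * eps k := by ring
          _ = Fintype.card G + ν * eps k := by rw [← hnk]
          _ ≤ Fintype.card G + eps (Fintype.card G) := by omega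

end DY
section Indep

variable {G : Type*} [AddCommGroup G]


lemma not_isTIndep_of_relation [DecidableEq G] {A : Finset G}
    {a₁ a₂ a₃ : G} (h₁ : a₁ ∈ A) (h₂ : a₂ ∈ A) (h₃ : a₃ ∈ A) (ε₁ ε₂ ε₃ : ℤ)
    (habs : |ε₁| + |ε₂| + |ε₃| ≤ 3) (hne : ε₁ + ε₂ + ε₃ ≠ 0)
    (hrel : ε₁ • a₁ + ε₂ • a₂ + ε₃ • a₃ = 0) : ¬ IsTIndep 3 A := by
  intro hind
  set c : G → ℤ := fun g =>
    (if g = a₁ then ε₁ else 0) + (if g = a₂ then ε₂ else 0) + (if g = a₃ then ε₃ else 0)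
    with hcdef
  have hzero : ∀ x ∉ A, c x = 0 := by
    intro x hx
    have e1 : x ≠ a₁ := fun h => hx (h ▸ h₁)
    have e2 : x ≠ a₂ := fun h => hx (h ▸ h₂)
    have e3 : x ≠ a₃ := fun h => hx (h ▸ h₃)
    simp [hcdef, e1, e2, e3]
  have hsum1 : ∀ (ε : ℤ) (a : G), a ∈ A → (∑ x ∈ A, (if x = a then ε else 0)) = ε := by
    intro ε a ha
    rw [Finset.sum_ite_eq' A a (fun _ => ε)]
    simp [ha]
  have habs' : (∑ x ∈ A, |c x|) ≤ (3 : ℤ) := by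
    have hptw : ∀ x ∈ A, |c x| ≤
        (if x = a₁ then |ε₁| else 0) + (if x = a₂ then |ε₂| else 0)
          + (if x = a₃ then |ε₃| else 0) := by
      intro x _
      refine le_trans (abs_add_three _ _ _) ?_
      gcongr <;> split <;> simp
    calc (∑ x ∈ A, |c x|)
        ≤ ∑ x ∈ A, ((if x = a₁ then |ε₁| else 0) + (if x = a₂ then |ε₂| else 0)
          + (if x = a₃ then |ε₃| else 0)) := Finset.sum_le_sum hptw
    _ = |ε₁| + |ε₂| + |ε₃| := by
        rw [Finset.sum_add_distrib, Finset.sum_add_distrib,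
          hsum1 |ε₁| a₁ h₁, hsum1 |ε₂| a₂ h₂, hsum1 |ε₃| a₃ h₃]
    _ ≤ 3 := habs
  have hsmul : ∀ (ε : ℤ) (a : G), a ∈ A →
      (∑ x ∈ A, (if x = a then ε else 0) • x) = ε • a := by
    intro ε a ha
    have : ∀ x ∈ A, (if x = a then ε else 0) • x = (if x = a then ε • a else 0) := by
      intro x _
      split
      · next h => rw [h]
      · rw [zero_smul]
    rw [Finset.sum_congr rfl this, Finset.sum_ite_eq' A a (fun _ => ε • a)]
    simp [ha]
  have hrel' : (∑ x ∈ A, c x • x) = 0 := by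
    have : ∀ x ∈ A, c x • x = (if x = a₁ then ε₁ else 0) • x
        + (if x = a₂ then ε₂ else 0) • x + (if x = a₃ then ε₃ else 0) • x := by
      intro x _
      simp [hcdef, add_smul]
    rw [Finset.sum_congr rfl this, Finset.sum_add_distrib, Finset.sum_add_distrib,
      hsmul ε₁ a₁ h₁, hsmul ε₂ a₂ h₂, hsmul ε₃ a₃ h₃]
    exact hrel
  have hall := hind c hzero habs' hrel'
  have h0 : (∑ x ∈ A, c x) = 0 := Finset.sum_eq_zero fun x _ => hall x
  have h1 : (∑ x ∈ A, c x) = ε₁ + ε₂ + ε₃ := by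
    simp only [hcdef]
    rw [Finset.sum_add_distrib, Finset.sum_add_distrib,
      hsum1 ε₁ a₁ h₁, hsum1 ε₂ a₂ h₂, hsum1 ε₃ a₃ h₃]
  exact hne (h1 ▸ h0)

lemma indep_upper [Fintype G] (hodd : Odd (Fintype.card G)) {A : Finset G}
    (hA : IsTIndep 3 A) :
    6 * A.card ≤ Fintype.card G + eps (Fintype.card G) := by
  classical
  set B : Finset G := A ∪ A.image (fun x => -x) with hBdef
  have hmem : ∀ z ∈ B, ∃ a ∈ A, ∃ ε : ℤ, (ε = 1 ∨ ε = -1) ∧ ε • a = z := by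
    intro z hz
    rcases Finset.mem_union.mp hz with hz | hz
    · exact ⟨z, hz, 1, Or.inl rfl, one_smul _ _⟩
    · obtain ⟨a, ha, rfl⟩ := Finset.mem_image.mp hz
      exact ⟨a, ha, -1, Or.inr rfl, by simp⟩
  have hBSF : ∀ x ∈ B, ∀ y ∈ B, x + y ∉ B := by
    intro x hx y hy hxy
    obtain ⟨a₁, ha₁, ε₁, hε₁, rfl⟩ := hmem x hx
    obtain ⟨a₂, ha₂, ε₂, hε₂, rfl⟩ := hmem y hy
    obtain ⟨a₃, ha₃, ε₃, hε₃, hz⟩ := hmem _ hxy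
    refine not_isTIndep_of_relation ha₁ ha₂ ha₃ ε₁ ε₂ (-ε₃) ?_ ?_ ?_ hA
    · rcases hε₁ with rfl | rfl <;> rcases hε₂ with rfl | rfl <;>
        rcases hε₃ with rfl | rfl <;> norm_num
    · rcases hε₁ with rfl | rfl <;> rcases hε₂ with rfl | rfl <;>
        rcases hε₃ with rfl | rfl <;> norm_num
    · rw [neg_smul, hz]
      abel
  have hdisj : Disjoint A (A.image (fun x => -x)) := by
    rw [Finset.disjoint_left]
    intro x hxA hxI
    obtain ⟨a, ha, hax⟩ := Finset.mem_image.mp hxI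
    refine not_isTIndep_of_relation hxA ha hxA 1 1 0 (by norm_num) (by norm_num) ?_ hA
    simp only [one_smul, zero_smul, add_zero]
    rw [← hax]
    abel
  have hBcard : B.card = 2 * A.card := by
    rw [hBdef, Finset.card_union_of_disjoint hdisj,
      Finset.card_image_of_injective _ neg_injective]
    ring
  have := dy (Fintype.card G) G le_rfl hodd B hBSF
  omega

end Indep
section Helpers

variable {α : Type*} {M : Type*} [AddCommGroup M] [DecidableEq α]

lemma sum_split (s : Finset α) (F : α → M) (c : α → ℤ) (h0 : ∀ x ∈ s, c x = 0 → F x = 0) :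
    ∑ x ∈ s, F x = ∑ x ∈ s.filter (fun x => 0 < c x), F x
      + ∑ x ∈ s.filter (fun x => c x < 0), F x := by
  rw [← Finset.sum_filter_add_sum_filter_not s (fun x => 0 < c x) F]
  congr 1
  rw [← Finset.sum_filter_add_sum_filter_not (s.filter (fun x => ¬ 0 < c x))
    (fun x => c x < 0) F, Finset.filter_filter, Finset.filter_filter]
  have h1 : s.filter (fun x => ¬ 0 < c x ∧ c x < 0) = s.filter (fun x => c x < 0) := by
    apply Finset.filter_congr
    intro x _
    constructor
    · rintro ⟨-, h⟩; exact h
    · intro h; exact ⟨by omega, h⟩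
  have h2 : ∑ x ∈ s.filter (fun x => ¬ 0 < c x ∧ ¬ c x < 0), F x = 0 := by
    apply Finset.sum_eq_zero
    intro x hx
    obtain ⟨hxs, h1', h2'⟩ := Finset.mem_filter.mp hx |>.imp id (fun h => h)
    exact h0 x hxs (by omega)
  rw [h1, h2, add_zero]

lemma sum_one_singleton {s : Finset α} {f : α → ℤ} (hpos : ∀ x ∈ s, 1 ≤ f x)
    (hsum : ∑ x ∈ s, f x = 1) : ∃ x ∈ s, s = {x} ∧ f x = 1 := by
  have hne : s.Nonempty := by
    rcases s.eq_empty_or_nonempty with rfl | h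
    · simp at hsum
    · exact h
  have hcard : s.card ≤ 1 := by
    by_contra hc
    push_neg at hc
    obtain ⟨x, hx, y, hy, hxy⟩ := Finset.one_lt_card.mp hc
    have h1 : ∑ z ∈ s, f z = f x + ∑ z ∈ s.erase x, f z := (Finset.add_sum_erase s f hx).symm
    have h2 : ∑ z ∈ s.erase x, f z = f y + ∑ z ∈ (s.erase x).erase y, f z :=
      (Finset.add_sum_erase _ f (Finset.mem_erase.mpr ⟨hxy.symm, hy⟩)).symm
    have h3 : (0 : ℤ) ≤ ∑ z ∈ (s.erase x).erase y, f z := by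
      apply Finset.sum_nonneg
      intro z hz
      have := hpos z (Finset.mem_of_mem_erase (Finset.mem_of_mem_erase hz))
      omega
    have hfx := hpos x hx
    have hfy := hpos y hy
    omega
  obtain ⟨x, hxeq⟩ := Finset.card_eq_one.mp (le_antisymm hcard (Finset.card_pos.mpr hne))
  refine ⟨x, by simp [hxeq], hxeq, ?_⟩
  rw [hxeq, Finset.sum_singleton] at hsum
  exact hsum

end Helpers

section IntervalIndep

lemma interval_indep {p m : ℕ} (hp : Nat.Prime p) (hpdef : p = 6 * m + 5) :
    IsTIndep 3 ((Finset.Icc (m + 1) (2 * m + 1)).image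
      (Nat.cast : ℕ → ZMod p)) := by
  classical
  haveI : NeZero p := ⟨by omega⟩
  set I : Finset (ZMod p) :=
    (Finset.Icc (m + 1) (2 * m + 1)).image (Nat.cast : ℕ → ZMod p) with hIdef
  have hval : ∀ x ∈ I, m + 1 ≤ x.val ∧ x.val ≤ 2 * m + 1 := by
    intro x hx
    obtain ⟨j, hj, rfl⟩ := Finset.mem_image.mp hx
    rw [Finset.mem_Icc] at hj
    rw [ZMod.val_cast_of_lt (by omega)]
    omega
  intro c hc0 habs hrel
  -- the integer linear combination vanishes
  set u : ℤ := ∑ x ∈ I, c x * (x.val : ℤ) with hudef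
  have hu0 : u = 0 := by
    have hcastu : ((u : ℤ) : ZMod p) = 0 := by
      push_cast [hudef]
      have : ∀ x ∈ I, (c x : ZMod p) * ((x.val : ℕ) : ZMod p) = c x • x := by
        intro x _
        rw [ZMod.natCast_val, ZMod.cast_id, zsmul_eq_mul]
      rw [Finset.sum_congr rfl this, hrel]
    have hdvd : (p : ℤ) ∣ u := (ZMod.intCast_zmod_eq_zero_iff_dvd u p).mp hcastu
    refine Int.eq_zero_of_abs_lt_dvd hdvd ?_
    have habsu : |u| ≤ ∑ x ∈ I, |c x| * (2 * m + 1 : ℤ) := by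
      refine le_trans (Finset.abs_sum_le_sum_abs _ _) (Finset.sum_le_sum ?_)
      intro x hx
      rw [abs_mul]
      have h1 := (hval x hx).2
      have h2 : |(x.val : ℤ)| = (x.val : ℤ) := abs_of_nonneg (by positivity)
      rw [h2]
      apply mul_le_mul_of_nonneg_left _ (abs_nonneg _)
      exact_mod_cast h1
    rw [← Finset.sum_mul] at habsu
    have : (∑ x ∈ I, |c x|) * (2 * m + 1 : ℤ) ≤ 3 * (2 * m + 1) := by
      apply mul_le_mul_of_nonneg_right habs (by positivity)
    have hplt : (3 : ℤ) * (2 * m + 1) < (p : ℤ) := by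
      rw [hpdef]; push_cast; ring_nf; omega
    omega
  -- split into positive and negative parts
  set Ipos := I.filter (fun x => 0 < c x) with hIpos
  set Ineg := I.filter (fun x => c x < 0) with hIneg
  set a : ℤ := ∑ x ∈ Ipos, c x with ha
  set b : ℤ := ∑ x ∈ Ineg, -c x with hb
  have habssplit : (∑ x ∈ I, |c x|) = a + b := by
    rw [sum_split I (fun x => |c x|) c (fun x _ h => by simp [h])]
    congr 1
    · apply Finset.sum_congr rfl
      intro x hx
      exact abs_of_pos (Finset.mem_filter.mp hx).2
    · rw [hb]
      apply Finset.sum_congr rfl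
      intro x hx
      exact abs_of_neg (Finset.mem_filter.mp hx).2
  have husplit : u = (∑ x ∈ Ipos, c x * (x.val : ℤ)) - (∑ x ∈ Ineg, (-c x) * (x.val : ℤ)) := by
    rw [hudef, sum_split I (fun x => c x * (x.val : ℤ)) c (fun x _ h => by simp [h])]
    rw [← hIpos, ← hIneg]
    rw [sub_eq_add_neg, ← Finset.sum_neg_distrib]
    congr 1
    apply Finset.sum_congr rfl
    intro x hx
    ring
  set P : ℤ := ∑ x ∈ Ipos, c x * (x.val : ℤ) with hP
  set Q : ℤ := ∑ x ∈ Ineg, (-c x) * (x.val : ℤ) with hQ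
  have hPQ : P = Q := by
    have : P - Q = 0 := by rw [← husplit]; exact hu0
    omega
  have hPlow : a * (m + 1 : ℤ) ≤ P := by
    rw [ha, Finset.sum_mul, hP]
    apply Finset.sum_le_sum
    intro x hx
    have hcx := (Finset.mem_filter.mp hx).2
    have hv := (hval x ((Finset.filter_subset _ _) hx)).1
    have : (m + 1 : ℤ) ≤ (x.val : ℤ) := by exact_mod_cast hv
    exact mul_le_mul_of_nonneg_left this (by omega)
  have hPhigh : P ≤ a * (2 * m + 1 : ℤ) := by
    rw [ha, Finset.sum_mul, hP]
    apply Finset.sum_le_sum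
    intro x hx
    have hcx := (Finset.mem_filter.mp hx).2
    have hv := (hval x ((Finset.filter_subset _ _) hx)).2
    have : (x.val : ℤ) ≤ (2 * m + 1 : ℤ) := by exact_mod_cast hv
    exact mul_le_mul_of_nonneg_left this (by omega)
  have hQlow : b * (m + 1 : ℤ) ≤ Q := by
    rw [hb, Finset.sum_mul, hQ]
    apply Finset.sum_le_sum
    intro x hx
    have hcx := (Finset.mem_filter.mp hx).2
    have hv := (hval x ((Finset.filter_subset _ _) hx)).1
    have : (m + 1 : ℤ) ≤ (x.val : ℤ) := by exact_mod_cast hv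
    exact mul_le_mul_of_nonneg_left this (by omega)
  have hQhigh : Q ≤ b * (2 * m + 1 : ℤ) := by
    rw [hb, Finset.sum_mul, hQ]
    apply Finset.sum_le_sum
    intro x hx
    have hcx := (Finset.mem_filter.mp hx).2
    have hv := (hval x ((Finset.filter_subset _ _) hx)).2
    have : (x.val : ℤ) ≤ (2 * m + 1 : ℤ) := by exact_mod_cast hv
    exact mul_le_mul_of_nonneg_left this (by omega)
  have ha0 : 0 ≤ a := Finset.sum_nonneg fun x hx => le_of_lt (Finset.mem_filter.mp hx).2
  have hb0 : 0 ≤ b := Finset.sum_nonneg fun x hx => by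
    have := (Finset.mem_filter.mp hx).2; omega
  have hab3 : a + b ≤ 3 := by rw [habssplit] at habs; exact_mod_cast habs
  -- final case analysis
  have hc0I : ∀ x, c x = 0 := by
    by_cases hA : a = 0
    · by_cases hB : b = 0
      · -- everything vanishes
        have hzero : (∑ x ∈ I, |c x|) = 0 := by omega
        intro x
        by_cases hx : x ∈ I
        · have := (Finset.sum_eq_zero_iff_of_nonneg (fun y _ => abs_nonneg (c y))).mp hzero x hx
          exact abs_eq_zero.mp this
        · exact hc0 x hx
      · exfalso
        have hb1 : (1 : ℤ) ≤ b := by omega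
        have e1 : a * ((m : ℤ) + 1) = 0 := by rw [hA]; ring
        have e2 : a * (2 * (m : ℤ) + 1) = 0 := by rw [hA]; ring
        have : P = 0 := by omega
        have hQ1 : (1 : ℤ) * ((m : ℤ) + 1) ≤ b * ((m : ℤ) + 1) :=
          mul_le_mul_of_nonneg_right hb1 (by positivity)
        linarith
    · by_cases hB : b = 0
      · exfalso
        have ha1 : (1 : ℤ) ≤ a := by omega
        have e1 : b * ((m : ℤ) + 1) = 0 := by rw [hB]; ring
        have e2 : b * (2 * (m : ℤ) + 1) = 0 := by rw [hB]; ring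
        have : Q = 0 := by omega
        have hP1 : (1 : ℤ) * ((m : ℤ) + 1) ≤ a * ((m : ℤ) + 1) :=
          mul_le_mul_of_nonneg_right ha1 (by positivity)
        linarith
      · -- both ≥ 1
        exfalso
        have ha1 : 1 ≤ a := by omega
        have hb1 : 1 ≤ b := by omega
        have ha2 : a ≤ 2 := by omega
        have hb2 : b ≤ 2 := by omega
        rcases eq_or_lt_of_le ha1 with hA1 | hA2
        · rcases eq_or_lt_of_le hb1 with hB1 | hB2
          · -- a = 1, b = 1 : singleton analysis
            obtain ⟨xp, hxp, hIposeq, hcxp⟩ := sum_one_singleton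
              (s := Ipos) (f := c) (fun x hx => (Finset.mem_filter.mp hx).2)
              (by rw [← ha, ← hA1])
            obtain ⟨xn, hxn, hInegeq, hcxn⟩ := sum_one_singleton
              (s := Ineg) (f := fun x => -c x) (fun x hx => by
                have := (Finset.mem_filter.mp hx).2
                show (1 : ℤ) ≤ -c x
                omega) (by rw [← hb, ← hB1])
            have hvals : (xp.val : ℤ) = (xn.val : ℤ) := by
              have h1 : P = (xp.val : ℤ) := by
                rw [hP, hIposeq, Finset.sum_singleton, hcxp, one_mul]
              have h2 : Q = (xn.val : ℤ) := by
                rw [hQ, hInegeq, Finset.sum_singleton, hcxn, one_mul]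
              omega
            have hxx : xp = xn := by
              have hv : xp.val = xn.val := by exact_mod_cast hvals
              have e1 : ((xp.val : ℕ) : ZMod p) = xp := by
                rw [ZMod.natCast_val, ZMod.cast_id]
              have e2 : ((xn.val : ℕ) : ZMod p) = xn := by
                rw [ZMod.natCast_val, ZMod.cast_id]
              rw [← e1, ← e2, hv]
            have hp1 := (Finset.mem_filter.mp hxp).2
            have hp2 := (Finset.mem_filter.mp hxn).2
            rw [hxx] at hp1
            omega
          · -- a = 1, b = 2
            have hb2' : b = 2 := by omega
            have ha1' : a = 1 := by omega
            have hQ2 := hQlow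
            rw [hb2'] at hQ2
            have hP2 := hPhigh
            rw [ha1'] at hP2
            linarith
        · -- a = 2
          have ha2' : a = 2 := by omega
          have hb1' : b = 1 := by omega
          have hP2 := hPlow
          rw [ha2'] at hP2
          have hQ2 := hQhigh
          rw [hb1'] at hQ2
          linarith
  exact hc0I

end IntervalIndep
section Pullback

variable {G : Type*} [AddCommGroup G] [Fintype G] [DecidableEq G]
variable {H : Type*} [AddCommGroup H] [Fintype H] [DecidableEq H]

lemma pullback_indep (π : G →+ H) {I : Finset H} (hI : IsTIndep 3 I) :
    IsTIndep 3 (Finset.univ.filter (fun g => π g ∈ I)) := by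
  intro c hc0 habs hrel
  set A : Finset G := Finset.univ.filter (fun g => π g ∈ I) with hA
  have hmaps : ∀ g ∈ A, π g ∈ I := fun g hg => (Finset.mem_filter.mp hg).2
  set cb : H → ℤ := fun y => ∑ g ∈ A.filter (fun g => π g = y), c g with hcb
  have hcb0 : ∀ y ∉ I, cb y = 0 := by
    intro y hy
    apply Finset.sum_eq_zero
    intro g hg
    exfalso
    obtain ⟨hgA, hgy⟩ := Finset.mem_filter.mp hg
    exact hy (hgy ▸ hmaps g hgA)
  have hcbabs : (∑ y ∈ I, |cb y|) ≤ (3 : ℤ) := by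
    have h1 : ∀ y ∈ I, |cb y| ≤ ∑ g ∈ A.filter (fun g => π g = y), |c g| :=
      fun y _ => Finset.abs_sum_le_sum_abs _ _
    calc (∑ y ∈ I, |cb y|) ≤ ∑ y ∈ I, ∑ g ∈ A.filter (fun g => π g = y), |c g| :=
          Finset.sum_le_sum h1
    _ = ∑ g ∈ A, |c g| := Finset.sum_fiberwise_of_maps_to hmaps _
    _ ≤ 3 := habs
  have hcbrel : (∑ y ∈ I, cb y • y) = 0 := by
    have h1 : ∀ y ∈ I, cb y • y = ∑ g ∈ A.filter (fun g => π g = y), c g • π g := by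
      intro y _
      rw [hcb]
      rw [Finset.sum_smul]
      apply Finset.sum_congr rfl
      intro g hg
      rw [(Finset.mem_filter.mp hg).2]
    rw [Finset.sum_congr rfl h1, Finset.sum_fiberwise_of_maps_to hmaps _]
    have h2 : (∑ g ∈ A, c g • π g) = π (∑ g ∈ A, c g • g) := by
      rw [map_sum]
      exact Finset.sum_congr rfl fun g _ => (map_zsmul π _ _).symm
    rw [h2, hrel, map_zero]
  have hcbz := hI cb hcb0 hcbabs hcbrel
  have hsumA : (∑ g ∈ A, c g) = 0 := by
    rw [← Finset.sum_fiberwise_of_maps_to hmaps c]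
    exact Finset.sum_eq_zero fun y _ => hcbz y
  set Apos := A.filter (fun g => 0 < c g) with hApos
  set Aneg := A.filter (fun g => c g < 0) with hAneg
  set a : ℤ := ∑ g ∈ Apos, c g with ha
  set b : ℤ := ∑ g ∈ Aneg, -c g with hb
  have habssplit : (∑ g ∈ A, |c g|) = a + b := by
    rw [sum_split A (fun g => |c g|) c (fun g _ h => by simp [h])]
    congr 1
    · exact Finset.sum_congr rfl fun g hg => abs_of_pos (Finset.mem_filter.mp hg).2
    · rw [hb]
      exact Finset.sum_congr rfl fun g hg => abs_of_neg (Finset.mem_filter.mp hg).2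
  have hsumsplit : a = b := by
    have h1 := sum_split A c c (fun g _ h => h)
    rw [hsumA] at h1
    have hbneg : (∑ g ∈ Aneg, c g) = -b := by
      rw [hb, ← Finset.sum_neg_distrib]
      exact Finset.sum_congr rfl fun g _ => (neg_neg _).symm
    rw [hbneg, ← ha] at h1
    omega
  have hab3 : a + b ≤ 3 := by rw [habssplit] at habs; exact_mod_cast habs
  have ha0 : 0 ≤ a := Finset.sum_nonneg fun g hg => le_of_lt (Finset.mem_filter.mp hg).2
  intro x
  by_cases hx : x ∈ A
  swap
  · exact hc0 x hx
  by_cases haz : a = 0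
  · have hzero : (∑ g ∈ A, |c g|) = 0 := by omega
    have := (Finset.sum_eq_zero_iff_of_nonneg (fun g _ => abs_nonneg (c g))).mp hzero x hx
    exact abs_eq_zero.mp this
  · exfalso
    have ha1' : a = 1 := by omega
    obtain ⟨gp, hgp, hApeq, hcgp⟩ := sum_one_singleton (s := Apos) (f := c)
      (fun g hg => (Finset.mem_filter.mp hg).2) (by rw [← ha]; exact ha1')
    obtain ⟨gn, hgn, hAneq, hcgn'⟩ := sum_one_singleton (s := Aneg) (f := fun g => -c g)
      (fun g hg => by
        have := (Finset.mem_filter.mp hg).2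
        show (1 : ℤ) ≤ -c g
        omega)
      (by show (∑ g ∈ Aneg, -c g) = 1; rw [← hb]; omega)
    have hcgn : c gn = -1 := by
      have : -c gn = 1 := hcgn'
      omega
    have hrel2 : (∑ g ∈ A, c g • g) = gp - gn := by
      rw [sum_split A (fun g => c g • g) c (fun g _ h => by simp [h])]
      rw [← hApos, ← hAneg, hApeq, hAneq, Finset.sum_singleton, Finset.sum_singleton,
        hcgp, hcgn, one_smul]
      have : (-1 : ℤ) • gn = -gn := by simp
      rw [this]
      abel
    rw [hrel] at hrel2
    have heq : gp = gn := by
      have := sub_eq_zero.mp hrel2.symm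
      exact this
    have h1 := (Finset.mem_filter.mp hgp).2
    have h2 := (Finset.mem_filter.mp hgn).2
    rw [heq] at h1
    omega

end Pullback

section Surj

lemma exists_surj_zmod (G : Type*) [AddCommGroup G] [Fintype G] {p : ℕ} (hp : p.Prime)
    (hdvd : p ∣ Fintype.card G) : ∃ π : G →+ ZMod p, Function.Surjective π := by
  classical
  obtain ⟨ι, hι, q, hq, e, ⟨f⟩⟩ := AddCommGroup.equiv_directSum_zmod_of_finite G
  haveI := hι
  haveI hne : ∀ i, NeZero (q i ^ e i) := fun i => ⟨pow_ne_zero _ (hq i).pos.ne'⟩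
  haveI : NeZero p := ⟨hp.ne_zero⟩
  have hcard : Fintype.card G = ∏ i, (q i ^ e i) := by
    have e3 : G ≃ ∀ j, ZMod (q j ^ e j) := f.toEquiv.trans DFinsupp.equivFunOnFintype
    rw [Fintype.card_congr e3, Fintype.card_pi]
    exact Finset.prod_congr rfl fun i _ => ZMod.card _
  have hex : ∃ i, p ∣ q i ^ e i := by
    have h2 : p ∣ ∏ i, (q i ^ e i) := hcard ▸ hdvd
    obtain ⟨i, -, hi⟩ := (Prime.dvd_finset_prod_iff hp.prime _).mp h2
    exact ⟨i, hi⟩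
  obtain ⟨i, hpi⟩ := hex
  set ρ : ZMod (q i ^ e i) →+* ZMod p := ZMod.castHom hpi (ZMod p) with hρ
  set ev : (DirectSum ι fun j => ZMod (q j ^ e j)) →+ ZMod (q i ^ e i) :=
    DFinsupp.evalAddMonoidHom i with hev
  refine ⟨ρ.toAddMonoidHom.comp (ev.comp f.toAddMonoidHom), ?_⟩
  have hρs : Function.Surjective ρ := by
    intro y
    refine ⟨((y.val : ℕ) : ZMod (q i ^ e i)), ?_⟩
    rw [hρ, map_natCast]
    exact ZMod.natCast_rightInverse y
  have hevs : Function.Surjective ev := by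
    intro x
    refine ⟨DirectSum.of (fun j => ZMod (q j ^ e j)) i x, ?_⟩
    have h1 : ev (DirectSum.of (fun j => ZMod (q j ^ e j)) i x)
        = (DirectSum.of (fun j => ZMod (q j ^ e j)) i x) i := rfl
    rw [h1]
    exact DirectSum.of_eq_same (β := fun j => ZMod (q j ^ e j)) i x
  have hfs : Function.Surjective f.toAddMonoidHom := f.surjective
  exact hρs.comp (hevs.comp hfs)

end Surj

end Stmt13

theorem stmt13 {G : Type*} [AddCommGroup G] [Fintype G]
    (hn : 2 ≤ Fintype.card G) (hκ : Odd (AddMonoid.exponent G))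
    (p : ℕ) (hp : p.Prime) (hpdvd : p ∣ AddMonoid.exponent G) (hp5 : p % 6 = 5)
    (hmin : ∀ q : ℕ, q.Prime → q ∣ AddMonoid.exponent G → q % 6 = 5 → p ≤ q) :
    (sIndep G 3 : ℚ) = (1 + 1 / (p : ℚ)) * (Fintype.card G : ℚ) / 6 := by
  classical
  have hexp : AddMonoid.exponent G ∣ Fintype.card G := AddGroup.exponent_dvd_card
  have hpn : p ∣ Fintype.card G := hpdvd.trans hexp
  have hn0 : Fintype.card G ≠ 0 := by omega
  have hodd : Odd (Fintype.card G) := by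
    rw [Nat.odd_iff]
    by_contra hcon
    have h2 : 2 ∣ Fintype.card G := by omega
    haveI : Fact (Nat.Prime 2) := ⟨Nat.prime_two⟩
    obtain ⟨g, hg⟩ := exists_prime_addOrderOf_dvd_card 2 h2
    have h2e : 2 ∣ AddMonoid.exponent G := hg ▸ AddMonoid.addOrder_dvd_exponent g
    rcases hκ with ⟨t, ht⟩
    obtain ⟨u, hu⟩ := h2e
    omega
  have hp3 : p % 3 = 2 := by omega
  have hbset : ∀ q : ℕ, Nat.Prime q → q ∣ Fintype.card G → q % 3 = 2 → p ≤ q := by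
    intro q hq hqn hq3
    have hq2 : q ≠ 2 := by
      rintro rfl
      rcases hodd with ⟨t, ht⟩
      obtain ⟨u, hu⟩ := hqn
      omega
    have hqodd : q % 2 = 1 := Nat.odd_iff.mp (hq.odd_of_ne_two hq2)
    have e1 : q % 6 % 2 = q % 2 := Nat.mod_mod_of_dvd q (by norm_num)
    have e2 : q % 6 % 3 = q % 3 := Nat.mod_mod_of_dvd q (by norm_num)
    have e3 : q % 6 < 6 := Nat.mod_lt _ (by norm_num)
    have hq6 : q % 6 = 5 := by omega
    haveI : Fact (Nat.Prime q) := ⟨hq⟩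
    obtain ⟨g, hg⟩ := exists_prime_addOrderOf_dvd_card q hqn
    exact hmin q hq (hg ▸ AddMonoid.addOrder_dvd_exponent g) hq6
  have hbp : Stmt13.bp (Fintype.card G) = p := by
    obtain ⟨h1, h2, h3⟩ := Stmt13.bp_spec (n := Fintype.card G) ⟨p, hp, hpn, hp3⟩
    exact le_antisymm (Stmt13.bp_le hp hpn hp3) (hbset _ h1 h2 h3)
  have hph : Fintype.card G = p * (Fintype.card G / p) := (Nat.mul_div_cancel' hpn).symm
  set h : ℕ := Fintype.card G / p with hh
  have hepsn : Stmt13.eps (Fintype.card G) = h := by rw [Stmt13.eps, hbp]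
  obtain ⟨m, hm⟩ : ∃ m, p = 6 * m + 5 := ⟨p / 6, by omega⟩
  have hupper : ∀ M ∈ {M | ∃ A : Finset G, IsTIndep 3 A ∧ A.card = M}, M ≤ (m + 1) * h := by
    rintro M ⟨A, hA, rfl⟩
    have h6 := Stmt13.indep_upper hodd hA
    rw [hepsn] at h6
    have he : Fintype.card G + h = 6 * ((m + 1) * h) := by
      rw [hph, hm]; ring
    omega
  obtain ⟨π, hπs⟩ := Stmt13.exists_surj_zmod G hp hpn
  haveI : NeZero p := ⟨hp.ne_zero⟩
  set I : Finset (ZMod p) := (Finset.Icc (m + 1) (2 * m + 1)).image (Nat.cast : ℕ → ZMod p)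
    with hIdef
  have hIindep : IsTIndep 3 I := Stmt13.interval_indep hp hm
  set A₀ : Finset G := Finset.univ.filter (fun g => π g ∈ I) with hA₀
  have hA₀indep : IsTIndep 3 A₀ := Stmt13.pullback_indep π hIindep
  have hIcard : I.card = m + 1 := by
    rw [hIdef, Finset.card_image_of_injOn, Nat.card_Icc]
    · omega
    · intro j1 hj1 j2 hj2 hcast
      rw [Finset.mem_coe, Finset.mem_Icc] at hj1 hj2
      have e1 : (↑j1 : ZMod p).val = j1 := ZMod.val_cast_of_lt (by omega)
      have e2 : (↑j2 : ZMod p).val = j2 := ZMod.val_cast_of_lt (by omega)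
      rw [← e1, ← e2, hcast]
  have hfibc : (Stmt13.fib π 0).card = h := by
    have h1 : Fintype.card G = Fintype.card (ZMod p) * (Stmt13.fib π 0).card :=
      Stmt13.card_eq_quot_mul_fib π hπs 0
    rw [ZMod.card] at h1
    exact (Nat.eq_of_mul_eq_mul_left hp.pos (by omega)).symm
  have hA₀card : A₀.card = (m + 1) * h := by
    rw [hA₀, Stmt13.card_preimage π hπs I 0, hIcard, hfibc]
  have hmem : (m + 1) * h ∈ {M | ∃ A : Finset G, IsTIndep 3 A ∧ A.card = M} :=
    ⟨A₀, hA₀indep, hA₀card⟩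
  have hbdd : BddAbove {M | ∃ A : Finset G, IsTIndep 3 A ∧ A.card = M} := by
    refine ⟨Fintype.card G, ?_⟩
    rintro M ⟨A, -, rfl⟩
    exact le_trans (Finset.card_le_univ A) (le_of_eq (Finset.card_univ))
  have hsup : sIndep G 3 = (m + 1) * h := by
    rw [sIndep]
    exact le_antisymm (csSup_le ⟨_, hmem⟩ hupper) (le_csSup hbdd hmem)
  rw [hsup]
  have hpQ : (p : ℚ) ≠ 0 := by
    exact_mod_cast hp.ne_zero
  have hnQ : (Fintype.card G : ℚ) = (p : ℚ) * (h : ℚ) := by exact_mod_cast hph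
  have hmQ : (p : ℚ) = 6 * (m : ℚ) + 5 := by exact_mod_cast hm
  rw [hnQ]
  rw [hmQ]
  have h65 : (6 * (m : ℚ) + 5) ≠ 0 := by positivity
  field_simp
  push_cast
  ring
end

section
/- Let n and t be integers with 3 ≤ t ≤ n-1, set N = ⌊⌊n/t⌋ / ⌊(t+1)/2⌋⌋, and suppose B is a B_{⌊t/2⌋}-sequence contained in the interval of integers [1, N]. Then the set A = {⌊n/t⌋ - b : b ∈ B}, viewed as a subset of the cyclic group Z_n, is t-independent in Z_n. -/
/-- A set `B` of natural numbers is a `B_h`-sequence if all `h`-term sums of (not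
necessarily distinct) elements of `B` are distinct up to the order of the terms. -/
def IsBhSeq (h : ℕ) (B : Finset ℕ) : Prop :=
  ∀ f g : Multiset ℕ, (∀ x ∈ f, x ∈ B) → (∀ x ∈ g, x ∈ B) →
    Multiset.card f = h → Multiset.card g = h → f.sum = g.sum → f = g

lemma multiset_sum_replicate_sum (B : Finset ℕ) (f : ℕ → ℕ) :
    (∑ b ∈ B, Multiset.replicate (f b) b).sum = ∑ b ∈ B, f b * b := by
  induction B using Finset.cons_induction with
  | empty => simp
  | cons a s ha ih =>
      rw [Finset.sum_cons, Finset.sum_cons, Multiset.sum_add, ih, Multiset.sum_replicate,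
        smul_eq_mul]

lemma multiset_count_replicate_sum (B : Finset ℕ) (f : ℕ → ℕ) (b : ℕ) (hbB : b ∈ B) :
    Multiset.count b (∑ b' ∈ B, Multiset.replicate (f b') b') = f b := by
  rw [Multiset.count_sum']
  rw [Finset.sum_eq_single b (fun b' _ hb' => by
        rw [Multiset.count_replicate, if_neg hb'])
      (fun h => absurd hbB h)]
  rw [Multiset.count_replicate, if_pos rfl]

lemma bh_pad (h : ℕ) (B : Finset ℕ) (hBh : IsBhSeq h B) (hne : B.Nonempty)
    (f g : Multiset ℕ) (hf : ∀ x ∈ f, x ∈ B) (hg : ∀ x ∈ g, x ∈ B)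
    (hcard : Multiset.card f = Multiset.card g) (hle : Multiset.card f ≤ h)
    (hsum : f.sum = g.sum) : f = g := by
  obtain ⟨b0, hb0⟩ := hne
  have key := hBh (f + Multiset.replicate (h - Multiset.card f) b0)
      (g + Multiset.replicate (h - Multiset.card f) b0)
      (by intro x hx
          rcases Multiset.mem_add.1 hx with hx | hx
          · exact hf x hx
          · rw [Multiset.eq_of_mem_replicate hx]; exact hb0)
      (by intro x hx
          rcases Multiset.mem_add.1 hx with hx | hx
          · exact hg x hx
          · rw [Multiset.eq_of_mem_replicate hx]; exact hb0)
      (by simp [Multiset.card_replicate]; omega)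
      (by simp [Multiset.card_replicate]; omega)
      (by simp [Multiset.sum_replicate, hsum])
  exact add_right_cancel key


lemma keyL (t k h' N : ℕ) (B : Finset ℕ) (hB : B ⊆ Finset.Icc 1 N)
    (hh' : 2 ≤ h') (hNk : h' * N ≤ k) (hk : 1 ≤ k)
    (hth : t ≤ 2 * h')
    (lam : ℕ → ℤ) (habs : ∑ b ∈ B, |lam b| ≤ (t : ℤ))
    (heq : (k : ℤ) * (∑ b ∈ B, lam b) = ∑ b ∈ B, lam b * b)
    (hpos : 1 ≤ ∑ b ∈ B, lam b) : False := by
  set P : ℤ := ∑ b ∈ B, max (lam b) 0 with hP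
  set M : ℤ := ∑ b ∈ B, max (-lam b) 0 with hM
  have hPM : P - M = ∑ b ∈ B, lam b := by
    rw [hP, hM, ← Finset.sum_sub_distrib]
    exact Finset.sum_congr rfl fun b _ => by omega
  have hPMt : P + M ≤ (t : ℤ) := by
    rw [hP, hM, ← Finset.sum_add_distrib]
    refine le_trans (Finset.sum_le_sum fun b _ => ?_) habs
    rw [abs_eq_max_neg]
    omega
  have hP0 : 0 ≤ P := Finset.sum_nonneg fun b _ => le_max_right _ _
  have hM0 : 0 ≤ M := Finset.sum_nonneg fun b _ => le_max_right _ _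
  have hub : ∑ b ∈ B, lam b * b ≤ P * N - M := by
    have h1 : ∀ b ∈ B, lam b * b ≤ max (lam b) 0 * N - max (-lam b) 0 := by
      intro b hb
      have hmem := Finset.mem_Icc.1 (hB hb)
      have hb1 : (1 : ℤ) ≤ b := by exact_mod_cast hmem.1
      have hbN : (b : ℤ) ≤ N := by exact_mod_cast hmem.2
      rcases le_or_gt 0 (lam b) with hl | hl
      · rw [max_eq_left hl, max_eq_right (by omega)]
        have := mul_le_mul_of_nonneg_left hbN hl
        linarith
      · rw [max_eq_right (le_of_lt hl), max_eq_left (by omega)]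
        have := mul_le_mul_of_nonpos_left hb1 (le_of_lt hl)
        linarith
    refine le_trans (Finset.sum_le_sum h1) ?_
    rw [Finset.sum_sub_distrib, ← Finset.sum_mul]
  have hNk' : (h' : ℤ) * N ≤ k := by exact_mod_cast hNk
  have heq' : (k : ℤ) * (P - M) ≤ P * N - M := by rw [hPM]; rw [heq] at *; exact hub
  have hΛ : 1 ≤ P - M := by rw [hPM]; exact hpos
  have hb : (h' : ℤ) * (P - M) ≤ P := by
    have h2 : (h' : ℤ) * (P * N - M) ≤ P * k := by nlinarith
    have h3 : ((h' : ℤ) * (P - M)) * k ≤ P * k := by nlinarith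
    exact le_of_mul_le_mul_right h3 (by exact_mod_cast hk)
  have ht2 : (t : ℤ) ≤ 2 * h' := by exact_mod_cast hth
  rcases le_or_gt 2 (P - M) with hΛ2 | hΛ2
  · nlinarith
  · have hΛ1 : P - M = 1 := by omega
    have hPh : P = (h' : ℤ) := by nlinarith
    have : (k : ℤ) ≤ P * N - M := by rw [hΛ1] at heq'; linarith
    rw [hPh] at this
    have hh2 : (2 : ℤ) ≤ h' := by exact_mod_cast hh'
    nlinarith


set_option maxHeartbeats 1000000 in
lemma stmt14_aux (n t : ℕ) (ht : 3 ≤ t) (htn : t ≤ n - 1)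
    (B : Finset ℕ) (hB : B ⊆ Finset.Icc 1 (n / t / ((t + 1) / 2)))
    (hBh : IsBhSeq (t / 2) B) :
    IsTIndep t (B.image (fun b => ((n / t - b : ℕ) : ZMod n))) := by
  intro c hc0 hct hcsum x
  set k := n / t with hkdef
  set h' := (t + 1) / 2 with hh'def
  set N := k / h' with hNdef
  have hn4 : 4 ≤ n := by omega
  haveI : NeZero n := ⟨by omega⟩
  rcases Finset.eq_empty_or_nonempty B with rfl | hne
  · exact hc0 x (by simp)
  obtain ⟨b0, hb0B⟩ := hne
  have hh'2 : 2 ≤ h' := by omega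
  have hth : t ≤ 2 * h' := by omega
  have hN1 : 1 ≤ N := le_trans (Finset.mem_Icc.1 (hB hb0B)).1 (Finset.mem_Icc.1 (hB hb0B)).2
  have hNk : h' * N ≤ k := by rw [hNdef, mul_comm]; exact Nat.div_mul_le_self k h'
  have htk : t * k ≤ n := by rw [hkdef, mul_comm]; exact Nat.div_mul_le_self n t
  have hkn : k ≤ n := Nat.div_le_self n t
  clear_value N h' k
  clear hkdef hh'def hNdef
  have hk1 : 1 ≤ k := le_trans (by nlinarith) hNk
  have hbbound : ∀ b ∈ B, 1 ≤ b ∧ b ≤ N := fun b hb => Finset.mem_Icc.1 (hB hb)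
  have hbk : ∀ b ∈ B, b < k := by
    intro b hb
    have h1 := hbbound b hb
    nlinarith [hNk, hh'2, h1.1, h1.2]
  -- injectivity
  have hinj : ∀ b1 ∈ B, ∀ b2 ∈ B,
      ((k - b1 : ℕ) : ZMod n) = ((k - b2 : ℕ) : ZMod n) → b1 = b2 := by
    intro b1 hb1 b2 hb2 heq
    have h1 := hbk b1 hb1
    have h2 := hbk b2 hb2
    have hb1' := (hbbound b1 hb1).1
    have hb2' := (hbbound b2 hb2).1
    have hl1 : k - b1 < n := by omega
    have hl2 : k - b2 < n := by omega
    have hv := congrArg ZMod.val heq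
    rw [ZMod.val_cast_of_lt hl1, ZMod.val_cast_of_lt hl2] at hv
    omega
  set lam : ℕ → ℤ := fun b => c ((k - b : ℕ) : ZMod n) with hlam
  have habs : ∑ b ∈ B, |lam b| ≤ (t : ℤ) := by
    have h : ∑ x ∈ B.image (fun b => ((k - b : ℕ) : ZMod n)), |c x|
        = ∑ b ∈ B, |c ((k - b : ℕ) : ZMod n)| := Finset.sum_image hinj
    rw [h] at hct
    exact hct
  have hcsum' : ∑ b ∈ B, lam b • ((k - b : ℕ) : ZMod n) = 0 := by
    have h : ∑ x ∈ B.image (fun b => ((k - b : ℕ) : ZMod n)), c x • x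
        = ∑ b ∈ B, c ((k - b : ℕ) : ZMod n) • ((k - b : ℕ) : ZMod n) :=
      Finset.sum_image hinj
    rw [h] at hcsum
    exact hcsum
  -- pass to integers
  have hdvd : (n : ℤ) ∣ ∑ b ∈ B, lam b * ((k : ℤ) - b) := by
    rw [← ZMod.intCast_zmod_eq_zero_iff_dvd]
    push_cast
    rw [← hcsum']
    refine Finset.sum_congr rfl fun b hb => ?_
    rw [zsmul_eq_mul, Nat.cast_sub (le_of_lt (hbk b hb))]
    all_goals push_cast
    all_goals ring
  have hSbound : |∑ b ∈ B, lam b * ((k : ℤ) - b)| < (n : ℤ) := by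
    calc |∑ b ∈ B, lam b * ((k : ℤ) - b)|
        ≤ ∑ b ∈ B, |lam b * ((k : ℤ) - b)| := Finset.abs_sum_le_sum_abs _ _
      _ ≤ ∑ b ∈ B, |lam b| * ((k : ℤ) - 1) := by
          refine Finset.sum_le_sum fun b hb => ?_
          have hb1 : (1 : ℤ) ≤ b := by exact_mod_cast (hbbound b hb).1
          have hbk' : (b : ℤ) < k := by exact_mod_cast hbk b hb
          rw [abs_mul]
          have h2 : |(k : ℤ) - b| ≤ (k : ℤ) - 1 := by
            rw [abs_of_nonneg (by linarith)]; linarith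
          exact mul_le_mul_of_nonneg_left h2 (abs_nonneg _)
      _ = (∑ b ∈ B, |lam b|) * ((k : ℤ) - 1) := (Finset.sum_mul _ _ _).symm
      _ ≤ (t : ℤ) * ((k : ℤ) - 1) := by
          refine mul_le_mul_of_nonneg_right habs ?_
          have : (1 : ℤ) ≤ k := by exact_mod_cast hk1
          linarith
      _ < (n : ℤ) := by
          have h1 : (t : ℤ) * k ≤ n := by exact_mod_cast htk
          have h2 : (3 : ℤ) ≤ t := by exact_mod_cast ht
          nlinarith
  have hS0 : ∑ b ∈ B, lam b * ((k : ℤ) - b) = 0 :=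
    Int.eq_zero_of_abs_lt_dvd hdvd hSbound
  have hkey : (k : ℤ) * (∑ b ∈ B, lam b) = ∑ b ∈ B, lam b * (b : ℤ) := by
    have h1 : ∑ b ∈ B, lam b * ((k : ℤ) - b)
        = (∑ b ∈ B, lam b) * k - ∑ b ∈ B, lam b * b := by
      rw [Finset.sum_mul, ← Finset.sum_sub_distrib]
      exact Finset.sum_congr rfl fun b _ => by ring
    rw [h1] at hS0
    linarith [hS0]
  -- the coefficient sum vanishes
  have hΛ0 : ∑ b ∈ B, lam b = 0 := by
    by_contra hcon
    rcases lt_or_gt_of_ne hcon with hlt | hgt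
    · refine keyL t k h' N B hB hh'2 hNk hk1 hth (fun b => -lam b) (by simpa using habs)
        ?_ (by rw [Finset.sum_neg_distrib]; omega)
      rw [Finset.sum_neg_distrib, mul_neg, hkey, ← Finset.sum_neg_distrib]
      exact Finset.sum_congr rfl fun b _ => (neg_mul _ _).symm
    · exact keyL t k h' N B hB hh'2 hNk hk1 hth lam habs hkey (by omega)
  have hT0 : ∑ b ∈ B, lam b * (b : ℤ) = 0 := by rw [← hkey, hΛ0, mul_zero]
  -- multiset argument
  set F : Multiset ℕ := ∑ b ∈ B, Multiset.replicate (lam b).toNat b with hF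
  set G : Multiset ℕ := ∑ b ∈ B, Multiset.replicate (-lam b).toNat b with hG
  have hcardF : Multiset.card F = ∑ b ∈ B, (lam b).toNat := by
    rw [hF]
    simpa using map_sum Multiset.cardHom (fun b => Multiset.replicate (lam b).toNat b) B
  have hcardG : Multiset.card G = ∑ b ∈ B, (-lam b).toNat := by
    rw [hG]
    simpa using map_sum Multiset.cardHom (fun b => Multiset.replicate (-lam b).toNat b) B
  have hsumF : F.sum = ∑ b ∈ B, (lam b).toNat * b := by
    rw [hF]; exact multiset_sum_replicate_sum B _
  have hsumG : G.sum = ∑ b ∈ B, (-lam b).toNat * b := by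
    rw [hG]; exact multiset_sum_replicate_sum B _
  have hcard_eq : Multiset.card F = Multiset.card G := by
    have hc : ((∑ b ∈ B, (lam b).toNat : ℕ) : ℤ) = ((∑ b ∈ B, (-lam b).toNat : ℕ) : ℤ) := by
      push_cast
      have h1 : ∑ b ∈ B, (((lam b).toNat : ℤ) - ((-lam b).toNat : ℤ)) = ∑ b ∈ B, lam b :=
        Finset.sum_congr rfl fun b _ => by omega
      rw [Finset.sum_sub_distrib] at h1
      omega
    rw [hcardF, hcardG]
    exact_mod_cast hc
  have hsum_eq : F.sum = G.sum := by
    have hc : ((∑ b ∈ B, (lam b).toNat * b : ℕ) : ℤ)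
        = ((∑ b ∈ B, (-lam b).toNat * b : ℕ) : ℤ) := by
      push_cast
      have h1 : ∑ b ∈ B, (((lam b).toNat : ℤ) * b - ((-lam b).toNat : ℤ) * b)
          = ∑ b ∈ B, lam b * b := by
        refine Finset.sum_congr rfl fun b _ => ?_
        have h2 : ((lam b).toNat : ℤ) - ((-lam b).toNat : ℤ) = lam b := by omega
        nlinarith [h2]
      rw [Finset.sum_sub_distrib] at h1
      omega
    rw [hsumF, hsumG]
    exact_mod_cast hc
  have habs_nat : ∑ b ∈ B, ((lam b).toNat + (-lam b).toNat) ≤ t := by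
    have h1 : ∑ b ∈ B, (((lam b).toNat : ℤ) + ((-lam b).toNat : ℤ)) = ∑ b ∈ B, |lam b| :=
      Finset.sum_congr rfl fun b _ => by rw [abs_eq_max_neg]; omega
    have h2 : ((∑ b ∈ B, ((lam b).toNat + (-lam b).toNat) : ℕ) : ℤ) ≤ t := by
      push_cast
      rw [Finset.sum_add_distrib] at h1 ⊢
      omega
    exact_mod_cast h2
  have hcardle : Multiset.card F ≤ t / 2 := by
    rw [Finset.sum_add_distrib] at habs_nat
    have h3 := hcard_eq
    rw [hcardF, hcardG] at h3
    rw [hcardF]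
    omega
  have hmemF : ∀ y ∈ F, y ∈ B := by
    intro y hy
    rw [hF, Multiset.mem_sum] at hy
    obtain ⟨b, hbB, hyb⟩ := hy
    rw [Multiset.eq_of_mem_replicate hyb]
    exact hbB
  have hmemG : ∀ y ∈ G, y ∈ B := by
    intro y hy
    rw [hG, Multiset.mem_sum] at hy
    obtain ⟨b, hbB, hyb⟩ := hy
    rw [Multiset.eq_of_mem_replicate hyb]
    exact hbB
  have hFG : F = G := bh_pad (t / 2) B hBh ⟨b0, hb0B⟩ F G hmemF hmemG hcard_eq hcardle hsum_eq
  have hzero : ∀ b ∈ B, lam b = 0 := by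
    intro b hbB
    have hcF : Multiset.count b F = (lam b).toNat := by
      rw [hF]; exact multiset_count_replicate_sum B _ b hbB
    have hcG : Multiset.count b G = (-lam b).toNat := by
      rw [hG]; exact multiset_count_replicate_sum B _ b hbB
    have h4 : (lam b).toNat = (-lam b).toNat := by rw [← hcF, ← hcG, hFG]
    omega
  by_cases hx : x ∈ B.image (fun b => ((k - b : ℕ) : ZMod n))
  · obtain ⟨b, hbB, rfl⟩ := Finset.mem_image.1 hx
    exact hzero b hbB
  · exact hc0 x hx

theorem stmt14 (n t : ℕ) (ht : 3 ≤ t) (htn : t ≤ n - 1)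
    (B : Finset ℕ) (hB : B ⊆ Finset.Icc 1 (n / t / ((t + 1) / 2)))
    (hBh : IsBhSeq (t / 2) B) :
    IsTIndep t (B.image (fun b => ((n / t - b : ℕ) : ZMod n))) :=
  stmt14_aux n t ht htn B hB hBh
end

section
/- Let G be a finite abelian group of order n ≥ 2 and let t be a positive integer. Then G contains a t-independent set of size ⌊(n / (2·σ(G,t)))^(1/t)⌋, where σ(G,t) = Σ_{h=1}^{t} |{x ∈ G : hx = 0}|; that is, s(G,t) ≥ ⌊(n / (2·σ(G,t)))^(1/t)⌋. -/
open Finset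

private lemma bern (M : ℕ) : ∀ s : ℕ, 1 + s * M ≤ (M + 1) ^ s := by
  intro s
  induction s with
  | zero => simp
  | succ s ih =>
    have h := Nat.mul_le_mul_right (M+1) ih
    rw [pow_succ]
    nlinarith [h, Nat.zero_le (s*M*M)]

private lemma sum_Icc_pow_natAbs (M : ℕ) : ∀ s : ℕ,
    ∑ v ∈ Finset.Icc (-(s : ℤ)) (s : ℤ), M ^ (s - v.natAbs) ≤ (M + 1) ^ s + s := by
  intro s
  induction s with
  | zero => simp
  | succ s ih =>
    have hset : Finset.Icc (-((s : ℕ) + 1 : ℤ)) ((s : ℕ) + 1 : ℤ)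
        = insert (-((s : ℤ) + 1)) (insert ((s : ℤ) + 1) (Finset.Icc (-(s : ℤ)) (s : ℤ))) := by
      ext v
      simp only [mem_Icc, mem_insert]
      omega
    have h1 : (-((s : ℤ) + 1)) ∉ insert ((s : ℤ) + 1) (Finset.Icc (-(s : ℤ)) (s : ℤ)) := by
      simp only [mem_insert, mem_Icc]; omega
    have h2 : ((s : ℤ) + 1) ∉ Finset.Icc (-(s : ℤ)) (s : ℤ) := by
      simp only [mem_Icc]; omega
    push_cast
    rw [hset, sum_insert h1, sum_insert h2]
    have e1 : (-((s : ℤ) + 1)).natAbs = s + 1 := by omega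
    have e2 : (((s : ℤ) + 1)).natAbs = s + 1 := by omega
    rw [e1, e2]
    have hinner : ∑ v ∈ Finset.Icc (-(s : ℤ)) (s : ℤ), M ^ (s + 1 - v.natAbs)
        = (∑ v ∈ Finset.Icc (-(s : ℤ)) (s : ℤ), M ^ (s - v.natAbs)) * M := by
      rw [Finset.sum_mul]
      refine Finset.sum_congr rfl fun v hv => ?_
      simp only [mem_Icc] at hv
      have : s + 1 - v.natAbs = (s - v.natAbs) + 1 := by omega
      rw [this, pow_succ]
    rw [hinner]
    have hb := bern M s
    have : (∑ v ∈ Finset.Icc (-(s : ℤ)) (s : ℤ), M ^ (s - v.natAbs)) * M ≤ ((M+1)^s + s) * M :=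
      Nat.mul_le_mul_right M ih
    have hpow : (M + 1) ^ (s + 1) = (M+1)^s * M + (M+1)^s := by ring
    simp only [Nat.sub_self, pow_zero]
    nlinarith

private noncomputable def Lset (m s : ℕ) : Finset (Fin m → ℤ) :=
  (Fintype.piFinset fun _ => Finset.Icc (-(s : ℤ)) (s : ℤ)).filter fun c => ∑ i, |c i| ≤ (s : ℤ)

private lemma Lset_card (m : ℕ) : ∀ s : ℕ, (Lset m s).card + 1 ≤ 2 * (m + 1) ^ s := by
  induction m with
  | zero =>
    intro s
    have h1 : (Lset 0 s).card ≤ 1 :=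
      Finset.card_le_one.mpr (fun a _ b _ => funext fun i => i.elim0)
    simpa using by omega
  | succ m ih =>
    intro s
    have hinj : (Lset (m + 1) s).card ≤
        ((Finset.Icc (-(s : ℤ)) (s : ℤ)).sigma fun v => Lset m (s - v.natAbs)).card := by
      apply Finset.card_le_card_of_injOn (fun c => ⟨c 0, Fin.tail c⟩)
      · intro c hc
        simp only [Lset, Finset.mem_coe, Finset.mem_filter, Fintype.mem_piFinset, Finset.mem_Icc] at hc
        obtain ⟨hbox, hsum⟩ := hc
        have habs0 : |c 0| ≤ (s : ℤ) :=
          le_trans (Finset.single_le_sum (f := fun i => |c i|)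
            (fun i _ => abs_nonneg _) (Finset.mem_univ 0)) hsum
        have hnat : (c 0).natAbs ≤ s := by
          rw [Int.abs_eq_natAbs] at habs0; exact_mod_cast habs0
        have hs0 : ((s - (c 0).natAbs : ℕ) : ℤ) = (s : ℤ) - |c 0| := by
          rw [Int.abs_eq_natAbs]; push_cast [hnat]; ring
        have hsucc : ∑ i : Fin (m+1), |c i| = |c 0| + ∑ i : Fin m, |c i.succ| :=
          Fin.sum_univ_succ _
        have htail : ∑ i : Fin m, |Fin.tail c i| ≤ (s : ℤ) - |c 0| := by
          have : ∑ i : Fin m, |Fin.tail c i| = ∑ i : Fin m, |c i.succ| := rfl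
          rw [this]; omega
        refine Finset.mem_sigma.mpr ⟨Finset.mem_Icc.mpr (abs_le.mp habs0), ?_⟩
        simp only [Lset, Finset.mem_filter, Fintype.mem_piFinset, Finset.mem_Icc]
        constructor
        · intro i
          have hi : |Fin.tail c i| ≤ (s : ℤ) - |c 0| :=
            le_trans (Finset.single_le_sum (f := fun i => |Fin.tail c i|)
              (fun i _ => abs_nonneg _) (Finset.mem_univ i)) htail
          rw [hs0]
          exact Finset.mem_Icc.mp (Finset.mem_Icc.mpr (abs_le.mp hi))
        · rw [hs0]; exact htail
      · intro a ha b hb hab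
        obtain ⟨h1, h2⟩ := Sigma.mk.inj_iff.mp hab
        have h2' : Fin.tail a = Fin.tail b := eq_of_heq h2
        funext i
        induction i using Fin.cases with
        | zero => exact h1
        | succ i => exact congrFun h2' i
    rw [Finset.card_sigma] at hinj
    have hterm : ∑ v ∈ Finset.Icc (-(s : ℤ)) (s : ℤ), ((Lset m (s - v.natAbs)).card + 1)
        ≤ ∑ v ∈ Finset.Icc (-(s : ℤ)) (s : ℤ), 2 * (m + 1) ^ (s - v.natAbs) :=
      Finset.sum_le_sum fun v _ => ih _
    rw [Finset.sum_add_distrib, Finset.sum_const, ← Finset.mul_sum] at hterm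
    have hIcc : (Finset.Icc (-(s : ℤ)) (s : ℤ)).card = 2 * s + 1 := by
      rw [Int.card_Icc]; omega
    rw [hIcc] at hterm
    simp only [smul_eq_mul, mul_one] at hterm
    have hgeo := sum_Icc_pow_natAbs (m + 1) s
    have : (m + 1 + 1) = (m + 2) := rfl
    omega

open Finset


private lemma sol_card {G : Type*} [AddCommGroup G] [Fintype G] [DecidableEq G]
    (l : ℕ) (g : G) [DecidablePred fun x : G => l • x + g = 0] :
    (Finset.univ.filter fun x : G => l • x + g = 0).card ≤ Nat.card {x : G // l • x = 0} := by
  classical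
  have hcard : Nat.card {x : G // l • x = 0}
      = (Finset.univ.filter fun x : G => l • x = 0).card := by
    rw [Nat.card_eq_fintype_card, Fintype.card_subtype]
  rw [hcard]
  rcases (Finset.univ.filter fun x : G => l • x + g = 0).eq_empty_or_nonempty with he | ⟨x0, hx0⟩
  · simp [he]
  · simp only [Finset.mem_filter, Finset.mem_univ, true_and] at hx0
    apply Finset.card_le_card_of_injOn (fun x => x - x0)
    · intro x hx
      simp only [Finset.mem_coe, Finset.mem_filter, Finset.mem_univ, true_and] at hx ⊢
      have h1 : l • (x - x0) = l • x - l • x0 := smul_sub l x x0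
      rw [h1]
      have h2 : l • x = -g := eq_neg_of_add_eq_zero_left hx
      have h0 : l • x0 = -g := eq_neg_of_add_eq_zero_left hx0
      rw [h2, h0, sub_self]
    · intro a _ b _ h
      simpa using sub_left_injective h

private lemma exists_coeff {G : Type*} [AddCommGroup G] [DecidableEq G] (t : ℕ)
    (A : Finset G) (hA : IsTIndep t A) (x : G) (hx : x ∉ A)
    (hbad : ¬ IsTIndep t (insert x A)) :
    ∃ (l : ℕ) (d : ↥A → ℤ), 1 ≤ l ∧ ((l : ℤ) + ∑ a : ↥A, |d a| ≤ (t : ℤ)) ∧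
      (l • x + ∑ a : ↥A, d a • (a : G) = 0) := by
  classical
  rw [IsTIndep] at hbad
  push_neg at hbad
  obtain ⟨c, hsupp, habs, hsum, y, hy⟩ := hbad
  rw [Finset.sum_insert hx] at habs hsum
  have hcx : c x ≠ 0 := by
    intro h0
    apply hy
    refine hA c (fun z hz => ?_) ?_ ?_ y
    · by_cases hzx : z = x
      · rw [hzx]; exact h0
      · exact hsupp z (by simp [Finset.mem_insert, hzx, hz])
    · rw [h0] at habs; simpa using habs
    · rw [h0] at hsum; simpa using hsum
  obtain ⟨c', habs', hsum', hpos'⟩ :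
      ∃ c' : G → ℤ, (|c' x| + ∑ z ∈ A, |c' z| ≤ (t : ℤ)) ∧
        (c' x • x + ∑ z ∈ A, c' z • z = 0) ∧ 0 < c' x := by
    rcases hcx.lt_or_gt with hneg | hpos
    · refine ⟨-c, by simpa using habs, ?_, by simpa using hneg⟩
      simp only [Pi.neg_apply, neg_smul]
      rw [Finset.sum_neg_distrib, ← neg_add, hsum, neg_zero]
    · exact ⟨c, habs, hsum, hpos⟩
  refine ⟨(c' x).toNat, fun a => c' a, by omega, ?_, ?_⟩
  · have h1 : ((c' x).toNat : ℤ) = c' x := Int.toNat_of_nonneg hpos'.le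
    rw [h1]
    have h2 : ∑ a : ↥A, |c' (a : G)| = ∑ z ∈ A, |c' z| := Finset.sum_coe_sort A (fun z => |c' z|)
    rw [h2]
    calc c' x + ∑ z ∈ A, |c' z| ≤ |c' x| + ∑ z ∈ A, |c' z| := by
          have := le_abs_self (c' x); omega
      _ ≤ (t : ℤ) := habs'
  · have h1 : (c' x).toNat • x = c' x • x := by
      rw [← natCast_zsmul, Int.toNat_of_nonneg hpos'.le]
    have h2 : ∑ a : ↥A, c' (a : G) • (a : G) = ∑ z ∈ A, c' z • z :=
      Finset.sum_coe_sort A (fun z => c' z • z)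
    rw [h1, h2, hsum']

private lemma extend_indep {G : Type*} [AddCommGroup G] [Fintype G] [DecidableEq G]
    (t : ℕ) (ht : 0 < t) (k : ℕ)
    (hkn : 2 * (∑ h ∈ Finset.Icc 1 t, Nat.card {x : G // h • x = 0}) * k ^ t ≤ Fintype.card G)
    (A : Finset G) (hA : IsTIndep t A) (hcard : A.card + 1 ≤ k) :
    ∃ x ∉ A, IsTIndep t (insert x A) := by
  classical
  by_contra hcon
  push_neg at hcon
  set n := Fintype.card G with hn
  set σ := ∑ h ∈ Finset.Icc 1 t, Nat.card {x : G // h • x = 0} with hσ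
  set j := A.card with hj
  clear_value n σ j
  -- σ ≥ 1
  have hσ1 : 1 ≤ σ := by
    have h1 : (1 : ℕ) ∈ Finset.Icc 1 t := Finset.mem_Icc.mpr ⟨le_refl 1, ht⟩
    have hpos : 0 < Nat.card {x : G // (1 : ℕ) • x = 0} := by
      have : Nonempty {x : G // (1 : ℕ) • x = 0} := ⟨⟨0, by simp⟩⟩
      exact Nat.card_pos
    calc 1 ≤ Nat.card {x : G // (1 : ℕ) • x = 0} := hpos
      _ ≤ σ := by
        rw [hσ]
        exact Finset.single_le_sum (f := fun h => Nat.card {x : G // h • x = 0})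
          (fun _ _ => Nat.zero_le _) h1
  -- the fingerprint property
  have key : ∀ x, x ∈ Aᶜ → ∃ (l : ℕ) (d : ↥A → ℤ), 1 ≤ l ∧
      ((l : ℤ) + ∑ a : ↥A, |d a| ≤ (t : ℤ)) ∧
      (l • x + ∑ a : ↥A, d a • (a : G) = 0) := by
    intro x hx
    rw [Finset.mem_compl] at hx
    exact exists_coeff t A hA x hx (hcon x hx)
  set Q : G → Prop := fun x => ∃ (l : ℕ) (d : ↥A → ℤ), 1 ≤ l ∧
      ((l : ℤ) + ∑ a : ↥A, |d a| ≤ (t : ℤ)) ∧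
      (l • x + ∑ a : ↥A, d a • (a : G) = 0) with hQ
  set T : Finset ((_ : ℕ) × (_ : ↥A → ℤ) × G) :=
    (Finset.Icc 1 t).sigma fun l =>
      ((Fintype.piFinset fun _ : ↥A => Finset.Icc (-(t : ℤ)) (t : ℤ)).filter
        fun d => (l : ℤ) + ∑ a : ↥A, |d a| ≤ (t : ℤ)).sigma fun d =>
          Finset.univ.filter fun x : G => l • x + ∑ a : ↥A, d a • (a : G) = 0 with hT
  have hcompl : (Aᶜ : Finset G).card ≤ T.card := by
    apply Finset.card_le_card_of_injOn
      (fun x => if h : Q x then ⟨h.choose, h.choose_spec.choose, x⟩ else ⟨1, fun _ => 0, x⟩)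
    · intro x hx
      have hQx : Q x := key x hx
      simp only [Finset.mem_coe]
      rw [dif_pos hQx]
      obtain ⟨hl1, hld, hsol⟩ := hQx.choose_spec.choose_spec
      set l := hQx.choose
      set d := hQx.choose_spec.choose
      have habs : ∑ a : ↥A, |d a| ≥ 0 := Finset.sum_nonneg fun a _ => abs_nonneg _
      have hlt : l ≤ t := by exact_mod_cast le_trans (by omega : (l : ℤ) ≤ (l : ℤ) + ∑ a : ↥A, |d a|) hld
      refine Finset.mem_sigma.mpr ⟨Finset.mem_Icc.mpr ⟨hl1, hlt⟩, ?_⟩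
      refine Finset.mem_sigma.mpr ⟨?_, ?_⟩
      · refine Finset.mem_filter.mpr ⟨?_, hld⟩
        refine Fintype.mem_piFinset.mpr fun a => ?_
        have ha : |d a| ≤ (t : ℤ) := by
          have h1 : |d a| ≤ ∑ b : ↥A, |d b| :=
            Finset.single_le_sum (fun b _ => abs_nonneg (d b)) (Finset.mem_univ a)
          have hl0 : (0 : ℤ) ≤ (l : ℤ) := Int.natCast_nonneg l
          linarith
        exact Finset.mem_Icc.mpr (abs_le.mp ha)
      · exact Finset.mem_filter.mpr ⟨Finset.mem_univ _, hsol⟩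
    · intro a haA b hbA hab
      simp only at hab
      rw [dif_pos (key a (Finset.mem_coe.mp haA)), dif_pos (key b (Finset.mem_coe.mp hbA))] at hab
      obtain ⟨-, h2⟩ := Sigma.mk.inj_iff.mp hab
      obtain ⟨-, h3⟩ := Sigma.mk.inj_iff.mp (eq_of_heq h2)
      exact eq_of_heq h3
  -- bound on T.card
  have hK1 : 1 ≤ k ^ (t - 1) := Nat.one_le_pow _ _ (by omega)
  have hTcard : T.card ≤ (2 * k ^ (t - 1) - 1) * σ := by
    rw [hT, Finset.card_sigma]
    have hbound : ∀ l ∈ Finset.Icc 1 t,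
        (((Fintype.piFinset fun _ : ↥A => Finset.Icc (-(t : ℤ)) (t : ℤ)).filter
          fun d => (l : ℤ) + ∑ a : ↥A, |d a| ≤ (t : ℤ)).sigma fun d =>
            Finset.univ.filter fun x : G => l • x + ∑ a : ↥A, d a • (a : G) = 0).card
        ≤ (2 * k ^ (t - 1) - 1) * Nat.card {x : G // l • x = 0} := by
      intro l hl
      clear hcompl hT T hQ Q key hcon hA
      rw [Finset.mem_Icc] at hl
      rw [Finset.card_sigma]
      have hsol : ∀ d ∈ ((Fintype.piFinset fun _ : ↥A => Finset.Icc (-(t : ℤ)) (t : ℤ)).filter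
          fun d => (l : ℤ) + ∑ a : ↥A, |d a| ≤ (t : ℤ)),
          (Finset.univ.filter fun x : G => l • x + ∑ a : ↥A, d a • (a : G) = 0).card
          ≤ Nat.card {x : G // l • x = 0} := fun d _ => sol_card l _
      calc _ ≤ ∑ _d ∈ ((Fintype.piFinset fun _ : ↥A => Finset.Icc (-(t : ℤ)) (t : ℤ)).filter
            fun d => (l : ℤ) + ∑ a : ↥A, |d a| ≤ (t : ℤ)), Nat.card {x : G // l • x = 0} :=
            Finset.sum_le_sum hsol
        _ = ((Fintype.piFinset fun _ : ↥A => Finset.Icc (-(t : ℤ)) (t : ℤ)).filter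
            fun d => (l : ℤ) + ∑ a : ↥A, |d a| ≤ (t : ℤ)).card * Nat.card {x : G // l • x = 0} := by
            rw [Finset.sum_const, smul_eq_mul]
        _ ≤ (2 * k ^ (t - 1) - 1) * Nat.card {x : G // l • x = 0} := by
            apply Nat.mul_le_mul_right
            -- transfer to Lset
            have e : ↥A ≃ Fin (Fintype.card ↥A) := Fintype.equivFin ↥A
            have hLb := Lset_card (Fintype.card ↥A) (t - l)
            have hcA : Fintype.card ↥A + 1 ≤ k := by
              rw [Fintype.card_coe, ← hj]; omega
            have hk1 : 1 ≤ k := by omega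
            have htl : t - l ≤ t - 1 := by omega
            have hmono : (Fintype.card ↥A + 1) ^ (t - l) ≤ k ^ (t - 1) := by
              calc (Fintype.card ↥A + 1) ^ (t - l) ≤ k ^ (t - l) :=
                  Nat.pow_le_pow_left hcA _
                _ ≤ k ^ (t - 1) := Nat.pow_le_pow_right hk1 htl
            have hL2 : (Lset (Fintype.card ↥A) (t - l)).card ≤ 2 * k ^ (t - 1) - 1 := by
              omega
            have htrans : ((Fintype.piFinset fun _ : ↥A => Finset.Icc (-(t : ℤ)) (t : ℤ)).filter
                fun d => (l : ℤ) + ∑ a : ↥A, |d a| ≤ (t : ℤ)).card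
                ≤ (Lset (Fintype.card ↥A) (t - l)).card := by
              apply Finset.card_le_card_of_injOn (fun d i => d (e.symm i))
              · intro d hd
                rw [Finset.mem_coe, Finset.mem_filter] at hd
                obtain ⟨_, hdsum⟩ := hd
                have habs : ∑ a : ↥A, |d a| ≥ 0 := Finset.sum_nonneg fun a _ => abs_nonneg _
                have hcast : ((t - l : ℕ) : ℤ) = (t : ℤ) - (l : ℤ) := by
                  have : l ≤ t := hl.2
                  push_cast [this]; ring
                have hsum2 : ∑ a : ↥A, |d a| ≤ ((t - l : ℕ) : ℤ) := by
                  rw [hcast]; omega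
                rw [Lset, Finset.mem_coe, Finset.mem_filter]
                constructor
                · refine Fintype.mem_piFinset.mpr fun i => ?_
                  have := Finset.single_le_sum (f := fun a : ↥A => |d a|)
                    (fun _ _ => abs_nonneg _) (Finset.mem_univ (e.symm i))
                  exact Finset.mem_Icc.mpr (abs_le.mp (le_trans this hsum2))
                · calc ∑ i, |d (e.symm i)| = ∑ a : ↥A, |d a| :=
                      Equiv.sum_comp e.symm (fun a => |d a|)
                    _ ≤ _ := hsum2
              · intro d1 _ d2 _ h12
                funext a
                have := congrFun h12 (e a)
                simpa using this
            exact le_trans htrans hL2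
    refine le_trans (Finset.sum_le_sum hbound) (le_of_eq ?_)
    rw [hσ, Finset.mul_sum]
  -- final contradiction
  have hTot : (Aᶜ : Finset G).card ≤ (2 * k ^ (t - 1) - 1) * σ := le_trans hcompl hTcard
  have hcc : (Aᶜ : Finset G).card = n - j := by rw [Finset.card_compl, hn, hj]
  have hjn : j ≤ n := by
    rw [hj, hn, ← Finset.card_univ]; exact Finset.card_le_card (Finset.subset_univ A)
  clear hcompl hTcard hT hQ key hcon hA
  clear T Q
  have hkt : k ^ t = k ^ (t - 1) * k := by
    conv_lhs => rw [show t = (t - 1) + 1 by omega]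
    rw [pow_succ]
  have hfin : n ≤ (2 * k ^ (t - 1) - 1) * σ + j := by omega
  rw [hkt] at hkn
  set K := k ^ (t - 1) with hKdef
  clear_value K
  have hk1 : 1 ≤ k := by omega
  zify [show 1 ≤ 2 * K by omega] at hkn hfin hcard hσ1 hK1 hk1
  nlinarith [mul_nonneg (show (0:ℤ) ≤ 2 * (σ:ℤ) * (K:ℤ) - 1 by nlinarith)
    (show (0:ℤ) ≤ (k:ℤ) - 1 by linarith)]

private lemma indep_empty {G : Type*} [AddCommGroup G] (t : ℕ) :
    IsTIndep t (∅ : Finset G) := by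
  intro c hc _ _ x
  exact hc x (Finset.notMem_empty x)


theorem stmt16 {G : Type*} [AddCommGroup G] [Fintype G]
    (hn : 2 ≤ Fintype.card G) (t : ℕ) (ht : 0 < t) :
    ⌊((Fintype.card G : ℝ) /
        (2 * (∑ h ∈ Finset.Icc 1 t, Nat.card {x : G // h • x = 0} : ℕ))) ^
      ((1 : ℝ) / (t : ℝ))⌋₊ ≤ sIndep G t := by
  classical
  set σ := (∑ h ∈ Finset.Icc 1 t, Nat.card {x : G // h • x = 0}) with hσ
  set F := ⌊((Fintype.card G : ℝ) / (2 * (σ : ℕ))) ^ ((1 : ℝ) / (t : ℝ))⌋₊ with hF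
  have hσ1 : 1 ≤ σ := by
    have h1 : (1 : ℕ) ∈ Finset.Icc 1 t := Finset.mem_Icc.mpr ⟨le_refl 1, ht⟩
    have hpos : 0 < Nat.card {x : G // (1 : ℕ) • x = 0} := by
      have : Nonempty {x : G // (1 : ℕ) • x = 0} := ⟨⟨0, by simp⟩⟩
      exact Nat.card_pos
    calc 1 ≤ Nat.card {x : G // (1 : ℕ) • x = 0} := hpos
      _ ≤ σ := by
        rw [hσ]
        exact Finset.single_le_sum (f := fun h => Nat.card {x : G // h • x = 0})
          (fun _ _ => Nat.zero_le _) h1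
  have hσR : (0 : ℝ) < 2 * (σ : ℝ) := by positivity
  have hbase : (0 : ℝ) ≤ (Fintype.card G : ℝ) / (2 * (σ : ℝ)) := by positivity
  have hkn : 2 * σ * F ^ t ≤ Fintype.card G := by
    have hfl : (F : ℝ) ≤ ((Fintype.card G : ℝ) / (2 * (σ : ℝ))) ^ ((1 : ℝ) / (t : ℝ)) := by
      rw [hF]
      exact Nat.floor_le (Real.rpow_nonneg hbase _)
    have h2 : ((F : ℝ)) ^ (t : ℕ) ≤
        (((Fintype.card G : ℝ) / (2 * (σ : ℝ))) ^ ((1 : ℝ) / (t : ℝ))) ^ (t : ℕ) :=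
      pow_le_pow_left₀ (Nat.cast_nonneg F) hfl t
    have h3 : (((Fintype.card G : ℝ) / (2 * (σ : ℝ))) ^ ((1 : ℝ) / (t : ℝ))) ^ (t : ℕ)
        = (Fintype.card G : ℝ) / (2 * (σ : ℝ)) := by
      rw [← Real.rpow_natCast (((Fintype.card G : ℝ) / (2 * (σ : ℝ))) ^ ((1 : ℝ) / (t : ℝ))) t,
        ← Real.rpow_mul hbase, one_div, inv_mul_cancel₀ (by exact_mod_cast ht.ne'), Real.rpow_one]
    rw [h3, le_div_iff₀ hσR] at h2
    have h4 : (2 : ℝ) * (σ : ℝ) * (F : ℝ) ^ (t : ℕ) ≤ (Fintype.card G : ℝ) := by linarith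
    exact_mod_cast h4
  have build : ∀ j : ℕ, j ≤ F → ∃ A : Finset G, IsTIndep t A ∧ A.card = j := by
    intro j
    induction j with
    | zero => exact fun _ => ⟨∅, indep_empty t, rfl⟩
    | succ j ih =>
      intro hj
      obtain ⟨A, hA, hAc⟩ := ih (by omega)
      obtain ⟨x, hx, hind⟩ := extend_indep t ht F hkn A hA (by omega)
      exact ⟨insert x A, hind, by rw [Finset.card_insert_of_notMem hx, hAc]⟩
  obtain ⟨A, hA, hAc⟩ := build F le_rfl
  have hbdd : BddAbove {m | ∃ A : Finset G, IsTIndep t A ∧ A.card = m} := by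
    refine ⟨Fintype.card G, fun m hm => ?_⟩
    obtain ⟨B, _, hB⟩ := hm
    rw [← hB, ← Finset.card_univ]
    exact Finset.card_le_card (Finset.subset_univ B)
  exact le_csSup hbdd ⟨A, hA, hAc⟩
end

section
/- Let G be a finite abelian group of order n ≥ 2, let t be a positive integer, and let m be a positive integer such that n > σ(G,t)·C(2m-2+t, t), where C(·,·) denotes the binomial coefficient and σ(G,t) = Σ_{h=1}^{t} |{x ∈ G : hx = 0}|. Then G contains a t-independent set of size m. -/
open Finset

lemma multiset_card_sum {α β : Type*} (s : Finset α) (f : α → Multiset β) :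
    Multiset.card (∑ a ∈ s, f a) = ∑ a ∈ s, Multiset.card (f a) := by
  classical
  induction s using Finset.induction with
  | empty => simp
  | insert _ _ h ih => simp [Finset.sum_insert h, ih]

lemma card_small_coeffs {α : Type*} [Fintype α] [DecidableEq α] (s : ℕ)
    (Λ : Finset (α → ℤ)) (hΛ : ∀ c ∈ Λ, ∑ a, (c a).natAbs ≤ s) :
    Λ.card ≤ (2 * Fintype.card α + s).choose s := by
  classical
  set M : (α → ℤ) → Multiset (Option (α × Bool)) := fun c =>
    Multiset.replicate (s - ∑ a, (c a).natAbs) none +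
      ∑ a : α, (Multiset.replicate (c a).toNat (some (a, true)) +
        Multiset.replicate (-(c a)).toNat (some (a, false))) with hM
  have hcount : ∀ c, ∀ a : α,
      Multiset.count (some (a, true)) (M c) = (c a).toNat ∧
      Multiset.count (some (a, false)) (M c) = (-(c a)).toNat := by
    intro c a
    rw [hM]
    simp only [Multiset.count_add, Multiset.count_replicate, Multiset.count_sum']
    constructor
    · rw [if_neg (by simp), zero_add, Finset.sum_congr rfl
        (g := fun b => if a = b then (c b).toNat else 0) (fun b _ => by
          by_cases h : a = b <;> simp [h, eq_comm])]
      simp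
    · rw [if_neg (by simp), zero_add, Finset.sum_congr rfl
        (g := fun b => if a = b then (-(c b)).toNat else 0) (fun b _ => by
          by_cases h : a = b <;> simp [h, eq_comm])]
      simp
  have hcard : ∀ c ∈ Λ, Multiset.card (M c) = s := by
    intro c hc
    rw [hM]
    simp only [Multiset.card_add, Multiset.card_replicate, multiset_card_sum]
    have hs : ∑ x : α, ((c x).toNat + (-(c x)).toNat) = ∑ a : α, (c a).natAbs :=
      Finset.sum_congr rfl (fun a _ => by omega)
    rw [hs]
    exact Nat.sub_add_cancel (hΛ c hc)
  have hinj : Set.InjOn M Λ := by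
    intro c hc c' hc' h
    funext a
    have h1 := (hcount c a).1
    have h2 := (hcount c a).2
    have h1' := (hcount c' a).1
    have h2' := (hcount c' a).2
    rw [h] at h1 h2
    rw [h1'] at h1; rw [h2'] at h2
    omega
  have hmap : ∀ c ∈ Λ, M c ∈ (univ : Finset (Sym (Option (α × Bool)) s)).image Sym.toMultiset := by
    intro c hc
    exact Finset.mem_image.2 ⟨⟨M c, hcard c hc⟩, Finset.mem_univ _, rfl⟩
  calc Λ.card ≤ ((univ : Finset (Sym (Option (α × Bool)) s)).image Sym.toMultiset).card :=
        Finset.card_le_card_of_injOn M hmap hinj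
    _ ≤ (univ : Finset (Sym (Option (α × Bool)) s)).card := Finset.card_image_le
    _ = Fintype.card (Sym (Option (α × Bool)) s) := rfl
    _ = (Fintype.card (Option (α × Bool)) + s - 1).choose s := Sym.card_sym_eq_choose s
    _ = (2 * Fintype.card α + s).choose s := by
        have : Fintype.card (Option (α × Bool)) = 2 * Fintype.card α + 1 := by
          simp [Fintype.card_option, Fintype.card_prod]; ring
        rw [this]
        congr 1
        omega

lemma card_sol_le {G : Type*} [AddCommGroup G] [Fintype G] [DecidableEq G] (h : ℕ) (g : G) :
    (univ.filter fun x : G => h • x = g).card ≤ Nat.card {x : G // h • x = 0} := by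
  classical
  rcases (univ.filter fun x : G => h • x = g).eq_empty_or_nonempty with he | ⟨x₀, hx₀⟩
  · simp [he]
  · rw [Nat.card_eq_fintype_card, Fintype.card_subtype]
    apply Finset.card_le_card_of_injOn (fun x => x - x₀)
    · intro x hx
      simp only [Finset.coe_filter, Finset.mem_filter, Finset.mem_univ, true_and, Set.mem_setOf_eq] at hx hx₀ ⊢
      rw [smul_sub, hx, hx₀, sub_self]
    · intro a _ b _ hab
      exact sub_left_injective hab

lemma nat_le_choose (a b : ℕ) : a ≤ (2 * a + b).choose (b + 1) := by
  rcases a with _ | a'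
  · exact Nat.zero_le _
  · have h1 : (2 * (a' + 1) + b).choose (b + 1) = (2 * (a' + 1) + b).choose (2 * a' + 1) := by
      rw [← Nat.choose_symm (by omega)]
      congr 1
      omega
    rw [h1]
    calc a' + 1 ≤ 2 * a' + 2 := by omega
      _ = ((2 * a' + 1) + 1).choose (2 * a' + 1) := by rw [Nat.choose_succ_self_right]
      _ ≤ (2 * (a' + 1) + b).choose (2 * a' + 1) := Nat.choose_le_choose _ (by omega)

lemma step_lemma {G : Type*} [AddCommGroup G] [Fintype G] {t m : ℕ} (ht : 0 < t)
    (h : (∑ h ∈ Finset.Icc 1 t, Nat.card {x : G // h • x = 0}) *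
        Nat.choose (2 * m - 2 + t) t < Fintype.card G)
    (A : Finset G) (hA : IsTIndep t A) (hk : A.card < m) :
    ∃ B : Finset G, IsTIndep t B ∧ B.card = A.card + 1 := by
  classical
  set σ : ℕ := ∑ h ∈ Finset.Icc 1 t, Nat.card {x : G // h • x = 0} with hσ
  set Λ : Finset (↥A → ℤ) := (Finset.Icc (fun _ : ↥A => -(t : ℤ)) fun _ => (t : ℤ)).filter
    (fun c => ∑ a, |c a| ≤ (t : ℤ) - 1) with hΛdef
  set sol : ℕ × (↥A → ℤ) → Finset G := fun p =>
    univ.filter fun x => (p.1 • x) + ∑ a, p.2 a • (a : G) = 0 with hsol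
  set bad : Finset G := (Finset.Icc 1 t ×ˢ Λ).biUnion sol with hbad
  -- count Λ
  have hΛcard : Λ.card ≤ (2 * A.card + (t - 1)).choose (t - 1) := by
    have := card_small_coeffs (α := ↥A) (t - 1) Λ (by
      intro c hc
      rw [hΛdef, Finset.mem_filter] at hc
      have hc2 := hc.2
      have hcast : ((∑ a, (c a).natAbs : ℕ) : ℤ) = ∑ a, |c a| := by
        push_cast [Int.natCast_natAbs]
        rfl
      have : ((∑ a, (c a).natAbs : ℕ) : ℤ) ≤ ((t - 1 : ℕ) : ℤ) := by
        rw [hcast]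
        have : ((t - 1 : ℕ) : ℤ) = (t : ℤ) - 1 := by omega
        rw [this]; exact hc2
      exact_mod_cast this)
    rwa [Fintype.card_coe] at this
  -- count each sol
  have hsolcard : ∀ p ∈ Finset.Icc 1 t ×ˢ Λ, (sol p).card ≤ Nat.card {x : G // p.1 • x = 0} := by
    intro p _
    rw [hsol]
    have : (univ.filter fun x : G => (p.1 • x) + ∑ a, p.2 a • (a : G) = 0)
        = univ.filter fun x : G => p.1 • x = -(∑ a, p.2 a • (a : G)) := by
      apply Finset.filter_congr
      intro x _
      constructor
      · intro hx
        have := add_eq_zero_iff_eq_neg.1 hx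
        exact this
      · intro hx; rw [hx]; abel
    rw [show (fun p : ℕ × (↥A → ℤ) => filter (fun x => p.1 • x + ∑ a : ↥A, p.2 a • (a:G) = 0) univ) p = filter (fun x => p.1 • x + ∑ a : ↥A, p.2 a • (a:G) = 0) univ from rfl, this]
    exact card_sol_le p.1 _
  -- count bad
  have hbadcard : bad.card ≤ σ * Λ.card := by
    calc bad.card ≤ ∑ p ∈ Finset.Icc 1 t ×ˢ Λ, (sol p).card := Finset.card_biUnion_le
      _ ≤ ∑ p ∈ Finset.Icc 1 t ×ˢ Λ, Nat.card {x : G // p.1 • x = 0} :=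
          Finset.sum_le_sum hsolcard
      _ = ∑ h ∈ Finset.Icc 1 t, ∑ _c ∈ Λ, Nat.card {x : G // h • x = 0} := by
          rw [Finset.sum_product]
      _ = σ * Λ.card := by
          rw [hσ, Finset.sum_mul]
          exact Finset.sum_congr rfl fun h _ => by rw [Finset.sum_const, smul_eq_mul, mul_comm]
  -- arithmetic: bad ∪ A is not everything
  obtain ⟨t', rfl⟩ : ∃ t', t = t' + 1 := ⟨t - 1, by omega⟩
  obtain ⟨m', rfl⟩ : ∃ m', m = m' + 1 := ⟨m - 1, by omega⟩
  have hkm : A.card ≤ m' := by omega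
  have hσ1 : 1 ≤ σ := by
    rw [hσ]
    calc 1 ≤ Nat.card {x : G // 1 • x = 0} := Nat.one_le_iff_ne_zero.2 (Nat.card_ne_zero.2
        ⟨⟨⟨0, smul_zero 1⟩⟩, inferInstance⟩)
      _ ≤ ∑ h ∈ Finset.Icc 1 (t' + 1), Nat.card {x : G // h • x = 0} :=
          Finset.single_le_sum (f := fun h => Nat.card {x : G // h • x = 0})
            (fun _ _ => Nat.zero_le _) (Finset.mem_Icc.2 (by omega))
  have harith : (bad ∪ A).card < Fintype.card G := by
    have h1 : (bad ∪ A).card ≤ σ * Λ.card + A.card :=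
      le_trans (Finset.card_union_le _ _) (Nat.add_le_add_right hbadcard _)
    have h2 : Λ.card ≤ (2 * m' + t').choose t' := by
      have heq : t' + 1 - 1 = t' := rfl
      rw [heq] at hΛcard
      exact le_trans hΛcard (Nat.choose_le_choose _ (by omega))
    have h3 : A.card ≤ σ * (2 * m' + t').choose (t' + 1) :=
      le_trans (le_trans hkm (nat_le_choose m' t')) (Nat.le_mul_of_pos_left _ hσ1)
    have h4 : (2 * (m' + 1) - 2 + (t' + 1)).choose (t' + 1)
        = (2 * m' + t').choose t' + (2 * m' + t').choose (t' + 1) := by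
      rw [show 2 * (m' + 1) - 2 + (t' + 1) = (2 * m' + t') + 1 by omega]
      exact Nat.choose_succ_succ _ _
    calc (bad ∪ A).card ≤ σ * Λ.card + A.card := h1
      _ ≤ σ * (2 * m' + t').choose t' + σ * (2 * m' + t').choose (t' + 1) :=
          add_le_add (Nat.mul_le_mul_left _ h2) h3
      _ = σ * (2 * (m' + 1) - 2 + (t' + 1)).choose (t' + 1) := by rw [h4, Nat.mul_add]
      _ < Fintype.card G := h
  -- pick a good element
  obtain ⟨x, hx⟩ : ∃ x : G, x ∉ bad ∪ A := by
    by_contra hcon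
    push_neg at hcon
    have : bad ∪ A = univ := Finset.eq_univ_iff_forall.2 hcon
    rw [this, Finset.card_univ] at harith
    exact lt_irrefl _ harith
  have hxbad : x ∉ bad := fun hc => hx (Finset.mem_union_left _ hc)
  have hxA : x ∉ A := fun hc => hx (Finset.mem_union_right _ hc)
  refine ⟨insert x A, ?_, Finset.card_insert_of_notMem hxA⟩
  intro c hc0 hnorm hsum
  rw [Finset.sum_insert hxA] at hnorm hsum
  by_cases hcx : c x = 0
  · -- reduce to independence of A
    have hcsupp : ∀ y ∉ A, c y = 0 := by
      intro y hy
      by_cases hyx : y = x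
      · rw [hyx]; exact hcx
      · exact hc0 y (by simp [Finset.mem_insert, hy, hyx])
    have habs : (∑ y ∈ A, |c y|) ≤ ((t' + 1 : ℕ) : ℤ) := by
      have := abs_nonneg (c x); linarith
    have hzero : (∑ y ∈ A, c y • y) = 0 := by
      rw [hcx, zero_smul, zero_add] at hsum; exact hsum
    exact hA c hcsupp habs hzero
  · exfalso
    set e : ℤ := if 0 < c x then 1 else -1 with he
    have hecx : e * c x = |c x| := by
      rcases lt_or_gt_of_ne hcx with hlt | hgt
      · rw [he, if_neg (by omega), abs_of_neg hlt]; ring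
      · rw [he, if_pos hgt, abs_of_pos hgt]; ring
    have habse : |e| = 1 := by
      rw [he]; split_ifs <;> simp
    set h₀ : ℕ := (c x).natAbs with hh₀
    set c' : ↥A → ℤ := fun a => e * c (a : G) with hc'
    have hcxabs : 1 ≤ |c x| := Int.one_le_abs (by exact hcx)
    have hnormA : (∑ y ∈ A, |c y|) ≤ ((t' + 1 : ℕ) : ℤ) - |c x| := by linarith
    have hc'norm : (∑ a : ↥A, |c' a|) ≤ ((t' + 1 : ℕ) : ℤ) - 1 := by
      have : (∑ a : ↥A, |c' a|) = ∑ y ∈ A, |c y| := by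
        rw [Finset.univ_eq_attach]
        rw [show (∑ a ∈ A.attach, |c' a|) = ∑ a ∈ A.attach, |c (a : G)| from
          Finset.sum_congr rfl fun a _ => by rw [hc', abs_mul, habse, one_mul]]
        exact Finset.sum_attach A fun y => |c y|
      rw [this]; linarith
    have hc'mem : c' ∈ Λ := by
      rw [hΛdef, Finset.mem_filter]
      refine ⟨Finset.mem_Icc.2 ⟨?_, ?_⟩, hc'norm⟩ <;>
      · intro a
        have h1 : |c' a| ≤ ((t' + 1 : ℕ) : ℤ) - 1 :=
          le_trans (Finset.single_le_sum (f := fun a : ↥A => |c' a|)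
            (fun a _ => abs_nonneg _) (Finset.mem_univ a)) hc'norm
        have := abs_le.1 h1
        simp only [Pi.neg_apply]
        push_cast at this ⊢
        omega
    have hh₀mem : h₀ ∈ Finset.Icc 1 (t' + 1) := by
      rw [Finset.mem_Icc]
      constructor
      · exact Int.natAbs_pos.2 hcx
      · have h1 : |c x| ≤ ((t' + 1 : ℕ) : ℤ) := by
          have : (0:ℤ) ≤ ∑ y ∈ A, |c y| := Finset.sum_nonneg fun y _ => abs_nonneg _
          linarith
        rw [Int.abs_eq_natAbs] at h1
        exact_mod_cast h1
    have hrel : h₀ • x + ∑ a : ↥A, c' a • (a : G) = 0 := by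
      have h1 : (h₀ : ℕ) • x = (e * c x) • x := by
        rw [← natCast_zsmul, hh₀, Int.natCast_natAbs, ← hecx]
      have h2 : (∑ a : ↥A, c' a • (a : G)) = e • ∑ y ∈ A, c y • y := by
        rw [Finset.smul_sum, Finset.univ_eq_attach]
        rw [show (∑ y ∈ A, e • c y • y) = ∑ y ∈ A, (e * c y) • y from
          Finset.sum_congr rfl fun y _ => (mul_smul e (c y) y).symm]
        exact Finset.sum_attach A fun y => (e * c y) • y
      rw [h1, h2, mul_smul]
      rw [← smul_add, hsum, smul_zero]
    apply hxbad
    rw [hbad]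
    refine Finset.mem_biUnion.2 ⟨(h₀, c'), Finset.mem_product.2 ⟨hh₀mem, hc'mem⟩, ?_⟩
    rw [hsol]
    exact Finset.mem_filter.2 ⟨Finset.mem_univ x, hrel⟩

theorem stmt17 {G : Type*} [AddCommGroup G] [Fintype G]
    (hn : 2 ≤ Fintype.card G) (t : ℕ) (ht : 0 < t) (m : ℕ) (hm : 0 < m)
    (h : (∑ h ∈ Finset.Icc 1 t, Nat.card {x : G // h • x = 0}) *
        Nat.choose (2 * m - 2 + t) t < Fintype.card G) :
    ∃ A : Finset G, IsTIndep t A ∧ A.card = m := by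
  have key : ∀ k, k ≤ m → ∃ A : Finset G, IsTIndep t A ∧ A.card = k := by
    intro k
    induction k with
    | zero =>
      intro _
      exact ⟨∅, fun c hc _ _ x => hc x (Finset.notMem_empty x), rfl⟩
    | succ k ih =>
      intro hk
      obtain ⟨A, hAi, hAc⟩ := ih (Nat.le_of_succ_le hk)
      obtain ⟨B, hBi, hBc⟩ := step_lemma ht h A hAi (by omega)
      exact ⟨B, hBi, by omega⟩
  exact key m le_rfl
end

section
/- Let G be a finite abelian group of order n ≥ 2 and let t ≥ 2 be an integer. Then (t!·n / 2^t)^(1/t) - t/2 < w(G,t) < (⌊t/2⌋!·n)^(1/⌊t/2⌋) + t/2; that is, G contains a weakly t-independent set of size greater than (t!·n / 2^t)^(1/t) - t/2, and every weakly t-independent subset of G has size less than (⌊t/2⌋!·n)^(1/⌊t/2⌋) + t/2. -/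
/-- A subset `A` of an (additive) abelian group is weakly `t`-independent if whenever
`λ₁a₁ + ⋯ + λₘaₘ = 0` with `a₁, …, aₘ` the (distinct) elements of `A`, each
`λᵢ ∈ {-1, 0, 1}`, and `|λ₁| + ⋯ + |λₘ| ≤ t`, all coefficients `λᵢ` vanish. -/
def IsWeakTIndep {G : Type*} [AddCommGroup G] (t : ℕ) (A : Finset G) : Prop :=
  ∀ c : G → ℤ, (∀ x ∉ A, c x = 0) → (∀ x, |c x| ≤ 1) →
    (∑ x ∈ A, |c x|) ≤ (t : ℤ) →
    (∑ x ∈ A, c x • x) = 0 → ∀ x, c x = 0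

/-- `wIndep G t` is the maximum size of a weakly `t`-independent subset of `G`. -/
noncomputable def wIndep (G : Type*) [AddCommGroup G] (t : ℕ) : ℕ :=
  sSup {m | ∃ A : Finset G, IsWeakTIndep t A ∧ A.card = m}

open Finset

private lemma natlem1 (M t : ℕ) (hM : 1 ≤ M) :
    t.factorial * (∑ k ∈ range t, (2 * M).choose k) < (2 * M + t) ^ t := by
  have hterm : ∀ k ∈ range t,
      t.factorial * (2 * M).choose k ≤ (2 * M) ^ k * t ^ (t - k) * t.choose k := by
    intro k hk
    have hkt : k ≤ t := le_of_lt (mem_range.1 hk)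
    calc t.factorial * (2 * M).choose k
        = t.choose k * k.factorial * (t - k).factorial * (2 * M).choose k := by
          rw [Nat.choose_mul_factorial_mul_factorial hkt]
      _ = t.choose k * ((2 * M).choose k * k.factorial) * (t - k).factorial := by ring
      _ = t.choose k * (2 * M).descFactorial k * (t - k).factorial := by
          rw [Nat.descFactorial_eq_factorial_mul_choose]; ring_nf
      _ ≤ t.choose k * (2 * M) ^ k * t ^ (t - k) := by
          apply Nat.mul_le_mul
          · exact Nat.mul_le_mul_left _ (Nat.descFactorial_le_pow _ _)
          · exact le_trans (Nat.factorial_le_pow _) (Nat.pow_le_pow_left (Nat.sub_le t k) _)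
      _ = (2 * M) ^ k * t ^ (t - k) * t.choose k := by ring
  calc t.factorial * (∑ k ∈ range t, (2 * M).choose k)
      = ∑ k ∈ range t, t.factorial * (2 * M).choose k := by rw [Finset.mul_sum]
    _ ≤ ∑ k ∈ range t, (2 * M) ^ k * t ^ (t - k) * t.choose k := Finset.sum_le_sum hterm
    _ < ∑ k ∈ range (t + 1), (2 * M) ^ k * t ^ (t - k) * t.choose k := by
        rw [Finset.sum_range_succ]
        have : 0 < (2 * M) ^ t * t ^ (t - t) * t.choose t := by
          simp [Nat.choose_self]
          positivity
        omega
    _ = (2 * M + t) ^ t := (add_pow (2 * M) t t).symm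

private lemma natlem2 (m s : ℕ) : (m - s) ^ s ≤ m.descFactorial s := by
  rw [Nat.descFactorial_eq_prod_range]
  calc (m - s) ^ s = ∏ _i ∈ range s, (m - s) := by
        rw [Finset.prod_const, Finset.card_range]
    _ ≤ ∏ i ∈ range s, (m - i) :=
        Finset.prod_le_prod' fun i hi =>
          Nat.sub_le_sub_left (le_of_lt (mem_range.1 hi)) m

private lemma lower_core {G : Type*} [AddCommGroup G] [Fintype G] [DecidableEq G]
    (t : ℕ) (ht : 2 ≤ t)
    (A : Finset G) (hA : IsWeakTIndep t A)
    (hmax : ∀ g ∉ A, ¬ IsWeakTIndep t (insert g A)) :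
    Fintype.card G ≤ ∑ k ∈ Finset.range t, (2 * A.card).choose k := by
  classical
  have claim : ∀ g : G, ∃ P N : Finset G, P ⊆ A ∧ N ⊆ A ∧ P.card + N.card ≤ t - 1 ∧
      (∑ x ∈ P, x) - (∑ x ∈ N, x) = g := by
    intro g
    by_cases hg : g ∈ A
    · exact ⟨{g}, ∅, by simpa using hg, by simp, by simp; omega, by simp⟩
    · have h := hmax g hg
      rw [IsWeakTIndep] at h
      push_neg at h
      obtain ⟨c, h0, h1, hsum, heq, x0, hx0⟩ := h
      rw [Finset.sum_insert hg] at hsum heq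
      have hcg : c g ≠ 0 := by
        intro hcg0
        have hA0 : ∀ x ∉ A, c x = 0 := by
          intro x hx
          by_cases hxg : x = g
          · rw [hxg]; exact hcg0
          · exact h0 x (by simp [hxg, hx])
        exact hx0 (hA c hA0 h1 (by rw [hcg0] at hsum; simpa using hsum)
          (by rw [hcg0] at heq; simpa using heq) x0)
      have hcg1 : c g = 1 ∨ c g = -1 := by
        have h1g := abs_le.mp (h1 g); omega
      have hcgsq : c g * c g = 1 := by rcases hcg1 with h | h <;> rw [h] <;> norm_num
      have habsg : |c g| = 1 := by rcases hcg1 with h | h <;> rw [h] <;> norm_num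
      set P := A.filter (fun a => c g * c a = -1) with hP
      set N := A.filter (fun a => c g * c a = 1) with hN
      have hPA : P ⊆ A := Finset.filter_subset _ _
      have hNA : N ⊆ A := Finset.filter_subset _ _
      refine ⟨P, N, hPA, hNA, ?_, ?_⟩
      · have hsum' : ∑ a ∈ A, |c a| ≤ (t : ℤ) - 1 := by rw [habsg] at hsum; omega
        have hdisj : Disjoint P N := by
          rw [Finset.disjoint_left]
          intro a haP haN
          rw [hP, Finset.mem_filter] at haP
          rw [hN, Finset.mem_filter] at haN
          omega
        have h2 : ((P ∪ N).card : ℤ) ≤ ∑ a ∈ A, |c a| := by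
          have hsub : P ∪ N ⊆ A := Finset.union_subset hPA hNA
          calc ((P ∪ N).card : ℤ) = ∑ _a ∈ P ∪ N, (1 : ℤ) := by simp
            _ ≤ ∑ a ∈ P ∪ N, |c a| := by
                apply Finset.sum_le_sum
                intro a ha
                rw [Finset.mem_union] at ha
                have : c a ≠ 0 := by
                  rcases ha with ha | ha
                  · rw [hP, Finset.mem_filter] at ha; intro h; rw [h] at ha; simp at ha
                  · rw [hN, Finset.mem_filter] at ha; intro h; rw [h] at ha; simp at ha
                exact Int.one_le_abs (by omega)
            _ ≤ ∑ a ∈ A, |c a| :=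
                Finset.sum_le_sum_of_subset_of_nonneg hsub fun a _ _ => abs_nonneg _
        rw [Finset.card_union_of_disjoint hdisj] at h2
        have := h2.trans hsum'
        push_cast at this
        omega
      · have hAsum : ∑ a ∈ A, c a • a = -(c g • g) := by
          have : c g • g + ∑ a ∈ A, c a • a = 0 := heq
          linear_combination (norm := abel) this
        have e1 : ∑ a ∈ A, (-(c g * c a)) • a = g := by
          have : ∑ a ∈ A, (-(c g * c a)) • a = (-(c g)) • ∑ a ∈ A, c a • a := by
            rw [Finset.smul_sum]
            exact Finset.sum_congr rfl fun a _ => by rw [smul_smul]; ring_nf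
          rw [this, hAsum, smul_neg, neg_smul, neg_neg, smul_smul, hcgsq, one_smul]
        have e2 : ∀ a ∈ A, (-(c g * c a)) • a
            = (if a ∈ P then a else 0) - (if a ∈ N then a else 0) := by
          intro a ha
          have h1a := abs_le.mp (h1 a)
          have htri : c g * c a = -1 ∨ c g * c a = 0 ∨ c g * c a = 1 := by
            rcases hcg1 with h | h <;> rw [h] <;> omega
          have hmemP : a ∈ P ↔ c g * c a = -1 := by rw [hP, Finset.mem_filter]; tauto
          have hmemN : a ∈ N ↔ c g * c a = 1 := by rw [hN, Finset.mem_filter]; tauto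
          rcases htri with h | h | h <;>
            simp [hmemP, hmemN, h, one_smul, neg_smul, zero_smul]
        have e3 : ∑ a ∈ A, ((if a ∈ P then a else 0) - (if a ∈ N then a else 0))
            = (∑ x ∈ P, x) - (∑ x ∈ N, x) := by
          rw [Finset.sum_sub_distrib, Finset.sum_ite_mem, Finset.sum_ite_mem,
            Finset.inter_eq_right.mpr hPA, Finset.inter_eq_right.mpr hNA]
        rw [← e3, ← Finset.sum_congr rfl e2, e1]
  choose P N hPA hNA hcard hsumeq using claim
  set F : G → Finset (G ⊕ G) := fun g => (P g).disjSum (N g) with hF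
  have hinj : Function.Injective F := by
    intro g g' h
    rw [Finset.disjSum_inj] at h
    rw [← hsumeq g, ← hsumeq g', h.1, h.2]
  set U : Finset (Finset (G ⊕ G)) :=
    (Finset.range t).biUnion (fun k => (A.disjSum A).powersetCard k) with hU
  have hmemU : ∀ g, F g ∈ U := by
    intro g
    rw [hU, Finset.mem_biUnion]
    refine ⟨(F g).card, Finset.mem_range.mpr ?_, Finset.mem_powersetCard.mpr ⟨?_, rfl⟩⟩
    · have := hcard g
      have : (F g).card = (P g).card + (N g).card := Finset.card_disjSum _ _
      omega
    · intro x hx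
      match x with
      | Sum.inl a =>
        rw [hF] at hx
        rw [Finset.inl_mem_disjSum] at hx ⊢
        exact hPA g hx
      | Sum.inr a =>
        rw [hF] at hx
        rw [Finset.inr_mem_disjSum] at hx ⊢
        exact hNA g hx
  calc Fintype.card G = (Finset.univ : Finset G).card := (Finset.card_univ).symm
    _ ≤ U.card := Finset.card_le_card_of_injOn F (fun g _ => hmemU g) (hinj.injOn)
    _ ≤ ∑ k ∈ Finset.range t, ((A.disjSum A).powersetCard k).card :=
        Finset.card_biUnion_le
    _ = ∑ k ∈ Finset.range t, (2 * A.card).choose k := by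
        apply Finset.sum_congr rfl
        intro k _
        rw [Finset.card_powersetCard, Finset.card_disjSum, two_mul]

private lemma upper_core {G : Type*} [AddCommGroup G] [Fintype G] [DecidableEq G]
    (t : ℕ) (ht : 2 ≤ t) (A : Finset G) (hA : IsWeakTIndep t A) :
    A.card.choose (t / 2) + 1 ≤ Fintype.card G := by
  classical
  set s := t / 2 with hsdef
  have hs1 : 1 ≤ s := by omega
  have hst : s + s ≤ t := by omega
  set Q : Finset (Finset G) := A.powerset.filter (fun S => S.card ≤ s) with hQ
  have hinj : Set.InjOn (fun S : Finset G => ∑ x ∈ S, x) Q := by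
    intro S hS T hT hST
    simp only [Finset.mem_coe, hQ, Finset.mem_filter, Finset.mem_powerset] at hS hT
    simp only at hST
    set c : G → ℤ := fun x => (if x ∈ S then 1 else 0) - (if x ∈ T then 1 else 0) with hc
    have h0 : ∀ x ∉ A, c x = 0 := by
      intro x hx
      have hxS : x ∉ S := fun h => hx (hS.1 h)
      have hxT : x ∉ T := fun h => hx (hT.1 h)
      simp [hc, hxS, hxT]
    have h1 : ∀ x, |c x| ≤ 1 := by
      intro x
      by_cases hxS : x ∈ S <;> by_cases hxT : x ∈ T <;> simp [hc, hxS, hxT]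
    have h2 : (∑ x ∈ A, |c x|) ≤ (t : ℤ) := by
      calc ∑ x ∈ A, |c x|
          ≤ ∑ x ∈ A, ((if x ∈ S then (1:ℤ) else 0) + (if x ∈ T then 1 else 0)) := by
            apply Finset.sum_le_sum
            intro x _
            by_cases hxS : x ∈ S <;> by_cases hxT : x ∈ T <;> simp [hc, hxS, hxT]
        _ = ((A ∩ S).card : ℤ) + ((A ∩ T).card : ℤ) := by
            rw [Finset.sum_add_distrib, Finset.sum_ite_mem, Finset.sum_ite_mem]
            simp
        _ ≤ (t : ℤ) := by
            rw [Finset.inter_eq_right.mpr hS.1, Finset.inter_eq_right.mpr hT.1]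
            have := hS.2; have := hT.2
            omega
    have h3 : (∑ x ∈ A, c x • x) = 0 := by
      have e : ∀ x ∈ A, c x • x = (if x ∈ S then x else 0) - (if x ∈ T then x else 0) := by
        intro x _
        by_cases hxS : x ∈ S <;> by_cases hxT : x ∈ T <;>
          simp [hc, hxS, hxT, one_smul, zero_smul, sub_smul]
      rw [Finset.sum_congr rfl e, Finset.sum_sub_distrib, Finset.sum_ite_mem,
        Finset.sum_ite_mem, Finset.inter_eq_right.mpr hS.1, Finset.inter_eq_right.mpr hT.1,
        hST, sub_self]
    have hall := hA c h0 h1 h2 h3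
    ext x
    constructor <;> intro hx <;> by_contra hx2
    · have := hall x; simp [hc, hx, hx2] at this
    · have := hall x; simp [hc, hx, hx2] at this
  have hsub : insert (∅ : Finset G) (A.powersetCard s) ⊆ Q := by
    intro S hS
    rw [Finset.mem_insert] at hS
    rw [hQ, Finset.mem_filter, Finset.mem_powerset]
    rcases hS with h | h
    · subst h; exact ⟨Finset.empty_subset _, by simp⟩
    · rw [Finset.mem_powersetCard] at h
      exact ⟨h.1, le_of_eq h.2⟩
  have hnotmem : (∅ : Finset G) ∉ A.powersetCard s := by
    intro h
    rw [Finset.mem_powersetCard] at h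
    simp at h
    omega
  calc A.card.choose s + 1
      = (insert (∅ : Finset G) (A.powersetCard s)).card := by
        rw [Finset.card_insert_of_notMem hnotmem, Finset.card_powersetCard]
    _ ≤ Q.card := Finset.card_le_card hsub
    _ ≤ (Finset.univ : Finset G).card :=
        Finset.card_le_card_of_injOn _ (fun S _ => Finset.mem_univ _) hinj
    _ = Fintype.card G := Finset.card_univ

theorem stmt19 {G : Type*} [AddCommGroup G] [Fintype G]
    (hn : 2 ≤ Fintype.card G) (t : ℕ) (ht : 2 ≤ t) :
    ((Nat.factorial t : ℝ) * (Fintype.card G : ℝ) / 2 ^ t) ^ ((1 : ℝ) / (t : ℝ)) -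
        (t : ℝ) / 2 < (wIndep G t : ℝ) ∧
    (wIndep G t : ℝ) <
      ((Nat.factorial (t / 2) : ℝ) * (Fintype.card G : ℝ)) ^
          ((1 : ℝ) / ((t / 2 : ℕ) : ℝ)) + (t : ℝ) / 2 := by
  classical
  set n := Fintype.card G with hndef
  set S : Set ℕ := {m | ∃ A : Finset G, IsWeakTIndep t A ∧ A.card = m} with hSdef
  have hbdd : BddAbove S := by
    refine ⟨n, ?_⟩
    rintro m ⟨A, -, rfl⟩
    exact le_trans (Finset.card_le_univ A) (le_of_eq Finset.card_univ)
  obtain ⟨a, ha⟩ := Fintype.exists_ne_of_one_lt_card (by omega) (0 : G)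
  have hsing : IsWeakTIndep t {a} := by
    intro c h0 h1 _ heq x
    by_cases hx : x = a
    · subst hx
      rw [Finset.sum_singleton] at heq
      have h1x := abs_le.mp (h1 x)
      have htri : c x = 1 ∨ c x = 0 ∨ c x = -1 := by omega
      rcases htri with h | h | h
      · rw [h, one_smul] at heq; exact (ha heq).elim
      · exact h
      · rw [h, neg_smul, one_smul, neg_eq_zero] at heq; exact (ha heq).elim
    · exact h0 x (by simp [hx])
  have h1mem : (1 : ℕ) ∈ S := ⟨{a}, hsing, Finset.card_singleton a⟩
  have hmemS : wIndep G t ∈ S := Nat.sSup_mem ⟨1, h1mem⟩ hbdd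
  obtain ⟨A, hAindep, hAcard⟩ := hmemS
  set m := wIndep G t with hmdef
  have hws : m = sSup S := rfl
  have hm1 : 1 ≤ m := by have := le_csSup hbdd h1mem; omega
  have hmax : ∀ g ∉ A, ¬ IsWeakTIndep t (insert g A) := by
    intro g hg hind
    have hmem : A.card + 1 ∈ S :=
      ⟨insert g A, hind, by rw [Finset.card_insert_of_notMem hg]⟩
    have := le_csSup hbdd hmem
    omega
  have ht0 : (0 : ℝ) < t := by positivity
  constructor
  · -- lower bound
    have key1 : n ≤ ∑ k ∈ Finset.range t, (2 * m).choose k := by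
      rw [← hAcard]; exact lower_core t ht A hAindep hmax
    have key1' : t.factorial * n < (2 * m + t) ^ t :=
      lt_of_le_of_lt (Nat.mul_le_mul_left _ key1) (natlem1 m t hm1)
    have hy : (0 : ℝ) < (m : ℝ) + (t : ℝ) / 2 := by positivity
    have hlt : ((t.factorial : ℝ) * n / 2 ^ t) < ((m : ℝ) + (t : ℝ) / 2) ^ t := by
      rw [div_lt_iff₀ (by positivity)]
      have he : ((m : ℝ) + (t : ℝ) / 2) ^ t * 2 ^ t = ((2 * m + t : ℕ) : ℝ) ^ t := by
        rw [← mul_pow]; push_cast; ring_nf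
      rw [he]
      exact_mod_cast key1'
    have hr := Real.rpow_lt_rpow (by positivity) hlt (by positivity : (0:ℝ) < 1 / t)
    rw [one_div, Real.pow_rpow_inv_natCast hy.le (by omega)] at hr
    rw [one_div]
    linarith
  · -- upper bound
    set s := t / 2 with hsdef
    have hs1 : 1 ≤ s := by omega
    have hst : 2 * s ≤ t := by omega
    have hsreal : (s : ℝ) ≤ (t : ℝ) / 2 := by
      rw [le_div_iff₀ (by norm_num)]
      exact_mod_cast (by omega : s * 2 ≤ t)
    have key2 : m.choose s + 1 ≤ n := by
      rw [← hAcard]; exact upper_core t ht A hAindep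
    have hnpos : (0 : ℝ) < (s.factorial : ℝ) * n := by positivity
    rcases le_or_gt (m : ℝ) ((t : ℝ) / 2) with hcase | hcase
    · have := Real.rpow_pos_of_pos hnpos ((1 : ℝ) / (s : ℝ))
      linarith
    · have hms : s + 1 ≤ m := by
        have : (s : ℝ) < (m : ℝ) := lt_of_le_of_lt hsreal hcase
        exact_mod_cast Nat.succ_le_of_lt (by exact_mod_cast this)
      have keyN : (m - s) ^ s < s.factorial * n := by
        calc (m - s) ^ s ≤ m.descFactorial s := natlem2 m s
          _ < m.descFactorial s + s.factorial := by
              have := s.factorial_pos; omega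
          _ = s.factorial * (m.choose s + 1) := by
              rw [Nat.descFactorial_eq_factorial_mul_choose]; ring
          _ ≤ s.factorial * n := Nat.mul_le_mul_left _ key2
      have hxpos : (0 : ℝ) < (m : ℝ) - (t : ℝ) / 2 := by linarith
      have hxle : (m : ℝ) - (t : ℝ) / 2 ≤ ((m - s : ℕ) : ℝ) := by
        rw [Nat.cast_sub (by omega)]
        linarith
      have hpow : ((m : ℝ) - (t : ℝ) / 2) ^ s < (s.factorial : ℝ) * n := by
        calc ((m : ℝ) - (t : ℝ) / 2) ^ s ≤ ((m - s : ℕ) : ℝ) ^ s :=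
              pow_le_pow_left₀ hxpos.le hxle s
          _ < (s.factorial : ℝ) * n := by exact_mod_cast keyN
      have hr := Real.rpow_lt_rpow (pow_nonneg hxpos.le s) hpow
        (by positivity : (0:ℝ) < 1 / s)
      rw [one_div, Real.pow_rpow_inv_natCast hxpos.le (by omega)] at hr
      rw [one_div]
      linarith
end
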